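/- arXiv:2004.13803 — 8 statements merged into one kernel-verified Lean document; each statement's English description precedes it below -/
import Mathlib

section
/- Let K = ℂ((t)), O = ℂ[[t]], and let [L₁],…,[L_k] be homothety classes of O-lattices in K^n. Then the min-convex hull satisfies minconv([L₁],…,[L_k]) = ⋃_{[L] ∈ minconv([L₂],…,[L_k])} minconv([L₁],[L]). -/
set_option maxHeartbeats 1000000
set_option synthInstance.maxHeartbeats 1000000

open Pointwise

noncomputable section

/-- `K = ℂ((t))`, the field of formal Laurent series over `ℂ`. -/
abbrev K := LaurentSeries ℂ

/-- `O = ℂ[[t]]`, the ring of formal power series, the valuation ring of `K`. -/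
abbrev O := PowerSeries ℂ

/-- `K^n`. -/
abbrev V (n : ℕ) := Fin n → K

/-- An `O`-lattice in `K^n`: a finitely generated `O`-submodule whose `K`-span is all of
`K^n`. -/
def IsLattice {n : ℕ} (L : Submodule O (V n)) : Prop :=
  L.FG ∧ Submodule.span K (L : Set (V n)) = ⊤

instance : SMulCommClass K O K :=
  ⟨fun a b c => by simp only [Algebra.smul_def, smul_eq_mul]; ring⟩

/-- The uniformizer `t` of `O`, viewed as an element of `K`. -/
def tK : K := algebraMap O K PowerSeries.X

lemma tK_ne_zero : tK ≠ 0 :=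
  (map_ne_zero_iff _ (IsFractionRing.injective O K)).2 PowerSeries.X_ne_zero

/-- Two `O`-submodules of `K^n` are homothetic if they differ by an integer power of `t`. -/
def Homothetic {n : ℕ} (L L' : Submodule O (V n)) : Prop :=
  ∃ k : ℤ, L' = (tK ^ k) • L

instance homSetoid (n : ℕ) : Setoid (Submodule O (V n)) where
  r := Homothetic
  iseqv := by
    constructor
    · intro L; exact ⟨0, by simp⟩
    · rintro L L' ⟨k, rfl⟩
      exact ⟨-k, by rw [smul_smul, ← zpow_add₀ tK_ne_zero]; simp⟩
    · rintro L L' L'' ⟨k, rfl⟩ ⟨l, rfl⟩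
      exact ⟨l + k, by rw [smul_smul, ← zpow_add₀ tK_ne_zero]⟩

/-- Homothety classes of `O`-submodules of `K^n`. -/
def LatClass (n : ℕ) := Quotient (homSetoid n)

/-- A set `X` of homothety classes is min-convex if whenever classes
`[L₁], …, [L_k] ∈ X` (with `k ≥ 1`), the class of the intersection lies in `X`. -/
def MinConvex {n : ℕ} (X : Set (LatClass n)) : Prop :=
  ∀ (k : ℕ) (Ls : Fin (k + 1) → Submodule O (V n)),
    (∀ i, (⟦Ls i⟧ : LatClass n) ∈ X) → (⟦⨅ i, Ls i⟧ : LatClass n) ∈ X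

/-- The min-convex hull of a set of lattice classes: the smallest min-convex set
containing it. -/
def minconvHull {n : ℕ} (S : Set (LatClass n)) : Set (LatClass n) :=
  ⋂₀ {X | MinConvex X ∧ S ⊆ X}

section AuxLemmas

variable {n : ℕ}

lemma zsmul_zsmul (a b : ℤ) (N : Submodule O (V n)) :
    tK ^ a • (tK ^ b • N) = tK ^ (a + b) • N := by
  rw [smul_smul, ← zpow_add₀ tK_ne_zero]

lemma class_zsmul (a : ℤ) (N : Submodule O (V n)) :
    (⟦tK ^ a • N⟧ : LatClass n) = ⟦N⟧ :=
  Quotient.sound ⟨-a, by rw [zsmul_zsmul]; simp⟩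

lemma exact_class {M N : Submodule O (V n)} (h : (⟦M⟧ : LatClass n) = ⟦N⟧) :
    ∃ e : ℤ, M = tK ^ e • N := by
  obtain ⟨e, he⟩ := Quotient.exact h
  exact ⟨-e, by rw [he, zsmul_zsmul]; simp⟩

lemma mem_zsmul_iff {a : K} {N : Submodule O (V n)} {x : V n} :
    x ∈ a • N ↔ ∃ y ∈ N, a • y = x := Iff.rfl

lemma zsmul_mono {P Q : Submodule O (V n)} (a : ℤ) (h : P ≤ Q) :
    tK ^ a • P ≤ tK ^ a • Q := by
  intro x hx
  rw [mem_zsmul_iff] at hx ⊢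
  obtain ⟨y, hy, rfl⟩ := hx
  exact ⟨y, h hy, rfl⟩

lemma zsmul_le_self {d : ℤ} (hd : 0 ≤ d) (N : Submodule O (V n)) :
    tK ^ d • N ≤ N := by
  intro x hx
  rw [mem_zsmul_iff] at hx
  obtain ⟨y, hy, rfl⟩ := hx
  have h1 : tK ^ d = algebraMap O K (PowerSeries.X ^ d.toNat) := by
    rw [map_pow, ← zpow_natCast, Int.toNat_of_nonneg hd]; rfl
  have h2 : (algebraMap O K) (PowerSeries.X ^ d.toNat) • y
      = (PowerSeries.X ^ d.toNat : O) • y := algebraMap_smul (R := O) K (PowerSeries.X ^ d.toNat) y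
  rw [h1, h2]
  exact N.smul_mem _ hy

lemma zsmul_inf (a : ℤ) (P Q : Submodule O (V n)) :
    tK ^ a • (P ⊓ Q) = (tK ^ a • P) ⊓ (tK ^ a • Q) := by
  ext x
  simp only [mem_zsmul_iff, Submodule.mem_inf]
  constructor
  · rintro ⟨y, ⟨hyP, hyQ⟩, rfl⟩
    exact ⟨⟨y, hyP, rfl⟩, ⟨y, hyQ, rfl⟩⟩
  · rintro ⟨⟨y, hy, hxy⟩, ⟨z, hz, hxz⟩⟩
    have hyz : y = z :=
      smul_right_injective (V n) (zpow_ne_zero a tK_ne_zero) (hxy.trans hxz.symm)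
    exact ⟨y, ⟨hy, hyz ▸ hz⟩, hxy⟩

lemma zsmul_le_zsmul {a b : ℤ} (h : a ≤ b) (N : Submodule O (V n)) :
    tK ^ b • N ≤ tK ^ a • N := by
  have h2 : a + (b - a) = b := by omega
  have h1 : tK ^ b • N = tK ^ a • (tK ^ (b - a) • N) := by rw [zsmul_zsmul, h2]
  rw [h1]
  exact zsmul_mono a (zsmul_le_self (by omega) N)

lemma zsmul_inf_zsmul_same (a b : ℤ) (N : Submodule O (V n)) :
    (tK ^ a • N) ⊓ (tK ^ b • N) = tK ^ (max a b) • N := by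
  rcases le_total a b with h | h
  · rw [max_eq_right h, inf_eq_right.mpr (zsmul_le_zsmul h N)]
  · rw [max_eq_left h, inf_eq_left.mpr (zsmul_le_zsmul h N)]

lemma subset_minconvHull (S : Set (LatClass n)) : S ⊆ minconvHull S :=
  Set.subset_sInter fun _ hX => hX.2

lemma minconvHull_subset {S X : Set (LatClass n)} (h1 : MinConvex X) (h2 : S ⊆ X) :
    minconvHull S ⊆ X :=
  Set.sInter_subset_of_mem ⟨h1, h2⟩

lemma minConvex_minconvHull (S : Set (LatClass n)) : MinConvex (minconvHull S) := by
  intro k Ls h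
  refine Set.mem_sInter.mpr fun X hX => ?_
  exact hX.1 k Ls fun i => Set.sInter_subset_of_mem hX (h i)

lemma iInf_pair_fin (P Q : Submodule O (V n)) : (⨅ i, (![P, Q]) i) = P ⊓ Q := by
  apply le_antisymm
  · exact le_inf (iInf_le _ 0) (iInf_le _ 1)
  · refine le_iInf fun i => ?_
    fin_cases i
    · exact inf_le_left
    · exact inf_le_right

lemma minConvex_pair {X : Set (LatClass n)} (hX : MinConvex X)
    {P Q : Submodule O (V n)} (hP : (⟦P⟧ : LatClass n) ∈ X) (hQ : (⟦Q⟧ : LatClass n) ∈ X) :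
    (⟦P ⊓ Q⟧ : LatClass n) ∈ X := by
  have := hX 1 ![P, Q] (by intro i; fin_cases i <;> simpa)
  rwa [iInf_pair_fin] at this

lemma iInf_mem_of_closed (F : Submodule O (V n) → Prop)
    (hF : ∀ P Q, F P → F Q → F (P ⊓ Q)) :
    ∀ (m : ℕ) (Ms : Fin (m + 1) → Submodule O (V n)), (∀ j, F (Ms j)) → F (⨅ j, Ms j) := by
  intro m
  induction m with
  | zero =>
    intro Ms h
    have h0 : (⨅ j, Ms j) = Ms 0 := by
      apply le_antisymm (iInf_le _ 0)
      refine le_iInf fun i => ?_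
      fin_cases i; exact le_refl _
    rw [h0]; exact h 0
  | succ m ih =>
    intro Ms h
    have h0 : (⨅ j, Ms j) = Ms 0 ⊓ ⨅ j : Fin (m + 1), Ms j.succ := by
      apply le_antisymm
      · exact le_inf (iInf_le _ 0) (le_iInf fun j => iInf_le _ j.succ)
      · refine le_iInf fun j => ?_
        rcases Fin.eq_zero_or_eq_succ j with h1 | ⟨j', rfl⟩
        · rw [h1]; exact inf_le_left
        · exact inf_le_right.trans (iInf_le _ j')
    rw [h0]
    exact hF _ _ (h 0) (ih _ fun j => h j.succ)

lemma mem_minconvHull_pair {A B : Submodule O (V n)} {D : LatClass n}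
    (hD : D ∈ minconvHull {(⟦A⟧ : LatClass n), ⟦B⟧}) :
    D = ⟦A⟧ ∨ D = ⟦B⟧ ∨ ∃ a b : ℤ, D = ⟦(tK ^ a • A) ⊓ (tK ^ b • B)⟧ := by
  set GB : Submodule O (V n) → Prop := fun N =>
    (∃ a : ℤ, N = tK ^ a • A) ∨ (∃ b : ℤ, N = tK ^ b • B) ∨
      (∃ a b : ℤ, N = (tK ^ a • A) ⊓ (tK ^ b • B)) with hGBdef
  set XB : Set (LatClass n) :=
    {D | D = ⟦A⟧ ∨ D = ⟦B⟧ ∨ ∃ a b : ℤ, D = ⟦(tK ^ a • A) ⊓ (tK ^ b • B)⟧} with hXBdef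
  have hclosed : ∀ P Q, GB P → GB Q → GB (P ⊓ Q) := by
    rintro P Q (⟨a, rfl⟩ | ⟨b, rfl⟩ | ⟨a, b, rfl⟩) (⟨a', rfl⟩ | ⟨b', rfl⟩ | ⟨a', b', rfl⟩)
    · exact Or.inl ⟨max a a', zsmul_inf_zsmul_same a a' A⟩
    · exact Or.inr (Or.inr ⟨a, b', rfl⟩)
    · refine Or.inr (Or.inr ⟨max a a', b', ?_⟩)
      rw [← inf_assoc, zsmul_inf_zsmul_same]
    · exact Or.inr (Or.inr ⟨a', b, inf_comm _ _⟩)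
    · exact Or.inr (Or.inl ⟨max b b', zsmul_inf_zsmul_same b b' B⟩)
    · refine Or.inr (Or.inr ⟨a', max b b', ?_⟩)
      rw [inf_left_comm, zsmul_inf_zsmul_same]
    · refine Or.inr (Or.inr ⟨max a a', b, ?_⟩)
      rw [inf_right_comm, zsmul_inf_zsmul_same]
    · exact Or.inr (Or.inr ⟨a, max b b', by rw [inf_assoc, zsmul_inf_zsmul_same]⟩)
    · refine Or.inr (Or.inr ⟨max a a', max b b', ?_⟩)
      rw [inf_inf_inf_comm, zsmul_inf_zsmul_same, zsmul_inf_zsmul_same]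
  have hXB : MinConvex XB := by
    intro m Ms hMs
    have hGMs : ∀ j, GB (Ms j) := by
      intro j
      rcases hMs j with h | h | ⟨a, b, h⟩
      · obtain ⟨e, he⟩ := exact_class h
        exact Or.inl ⟨e, he⟩
      · obtain ⟨e, he⟩ := exact_class h
        exact Or.inr (Or.inl ⟨e, he⟩)
      · obtain ⟨e, he⟩ := exact_class h
        refine Or.inr (Or.inr ⟨e + a, e + b, ?_⟩)
        rw [he, zsmul_inf, zsmul_zsmul, zsmul_zsmul]
    rcases iInf_mem_of_closed GB hclosed m Ms hGMs with ⟨a, h⟩ | ⟨b, h⟩ | ⟨a, b, h⟩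
    · exact Or.inl (by rw [h, class_zsmul])
    · exact Or.inr (Or.inl (by rw [h, class_zsmul]))
    · exact Or.inr (Or.inr ⟨a, b, by rw [h]⟩)
  have hsub : ({(⟦A⟧ : LatClass n), ⟦B⟧} : Set (LatClass n)) ⊆ XB := by
    rintro D (rfl | rfl)
    · exact Or.inl rfl
    · exact Or.inr (Or.inl rfl)
  exact minconvHull_subset hXB hsub hD

end AuxLemmas

/-- `minconv([L₁],…,[L_k]) = ⋃_{[L] ∈ minconv([L₂],…,[L_k])} minconv([L₁],[L])`. -/
theorem minconvHull_insert {n k : ℕ} (L₁ : Submodule O (V n))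
    (Ls : Fin (k + 1) → Submodule O (V n))
    (hL₁ : IsLattice L₁) (hLs : ∀ i, IsLattice (Ls i)) :
    minconvHull (insert (⟦L₁⟧ : LatClass n) (Set.range fun i => (⟦Ls i⟧ : LatClass n))) =
      ⋃ C ∈ minconvHull (Set.range fun i => (⟦Ls i⟧ : LatClass n)),
        minconvHull {(⟦L₁⟧ : LatClass n), C} := by
  classical
  set S : Set (LatClass n) := Set.range fun i => (⟦Ls i⟧ : LatClass n) with hSdef
  have hS0 : (⟦Ls 0⟧ : LatClass n) ∈ minconvHull S := subset_minconvHull _ ⟨0, rfl⟩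
  apply Set.Subset.antisymm
  · apply minconvHull_subset
    · -- MinConvex of the union
      intro m Ms hMs
      set G : Submodule O (V n) → Prop := fun N =>
        (∃ a : ℤ, N = tK ^ a • L₁) ∨ ((⟦N⟧ : LatClass n) ∈ minconvHull S) ∨
          (∃ (a : ℤ) (P : Submodule O (V n)),
            (⟦P⟧ : LatClass n) ∈ minconvHull S ∧ N = (tK ^ a • L₁) ⊓ P) with hGdef
      have hGclosed : ∀ P Q, G P → G Q → G (P ⊓ Q) := by
        rintro P Q (⟨a, rfl⟩ | hP | ⟨a, P', hP', rfl⟩) (⟨a', rfl⟩ | hQ | ⟨a', Q', hQ', rfl⟩)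
        · exact Or.inl ⟨max a a', zsmul_inf_zsmul_same a a' L₁⟩
        · exact Or.inr (Or.inr ⟨a, Q, hQ, rfl⟩)
        · refine Or.inr (Or.inr ⟨max a a', Q', hQ', ?_⟩)
          rw [← inf_assoc, zsmul_inf_zsmul_same]
        · exact Or.inr (Or.inr ⟨a', P, hP, inf_comm _ _⟩)
        · exact Or.inr (Or.inl (minConvex_pair (minConvex_minconvHull _) hP hQ))
        · exact Or.inr (Or.inr ⟨a', P ⊓ Q',
            minConvex_pair (minConvex_minconvHull _) hP hQ', inf_left_comm _ _ _⟩)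
        · refine Or.inr (Or.inr ⟨max a a', P', hP', ?_⟩)
          rw [inf_right_comm, zsmul_inf_zsmul_same]
        · exact Or.inr (Or.inr ⟨a, P' ⊓ Q,
            minConvex_pair (minConvex_minconvHull _) hP' hQ, inf_assoc _ _ _⟩)
        · refine Or.inr (Or.inr ⟨max a a', P' ⊓ Q',
            minConvex_pair (minConvex_minconvHull _) hP' hQ', ?_⟩)
          rw [inf_inf_inf_comm, zsmul_inf_zsmul_same]
      have hGMs : ∀ j, G (Ms j) := by
        intro j
        obtain ⟨C, hC, hMsj⟩ := Set.mem_iUnion₂.mp (hMs j)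
        obtain ⟨P, rfl⟩ : ∃ P, C = (⟦P⟧ : LatClass n) := ⟨C.out, (Quotient.out_eq C).symm⟩
        rcases mem_minconvHull_pair hMsj with h | h | ⟨a, b, h⟩
        · obtain ⟨e, he⟩ := exact_class h
          exact Or.inl ⟨e, he⟩
        · exact Or.inr (Or.inl (h ▸ hC))
        · obtain ⟨e, he⟩ := exact_class h
          refine Or.inr (Or.inr ⟨e + a, tK ^ (e + b) • P, ?_, ?_⟩)
          · rw [class_zsmul]; exact hC
          · rw [he, zsmul_inf, zsmul_zsmul, zsmul_zsmul]
      rcases iInf_mem_of_closed G hGclosed m Ms hGMs with ⟨a, h⟩ | h | ⟨a, P, hP, h⟩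
      · rw [h, class_zsmul]
        exact Set.mem_biUnion hS0 (subset_minconvHull _ (Set.mem_insert _ _))
      · exact Set.mem_biUnion h
          (subset_minconvHull _ (Set.mem_insert_of_mem _ rfl))
      · rw [h]
        refine Set.mem_biUnion hP ?_
        refine minConvex_pair (minConvex_minconvHull _) ?_ ?_
        · rw [class_zsmul]
          exact subset_minconvHull _ (Set.mem_insert _ _)
        · exact subset_minconvHull _ (Set.mem_insert_of_mem _ rfl)
    · -- insert ⊆ union
      rintro D (rfl | ⟨i, rfl⟩)
      · exact Set.mem_biUnion hS0 (subset_minconvHull _ (Set.mem_insert _ _))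
      · exact Set.mem_biUnion (subset_minconvHull S ⟨i, rfl⟩)
          (subset_minconvHull _ (Set.mem_insert_of_mem _ rfl))
  · refine Set.iUnion₂_subset fun C hC => ?_
    apply minconvHull_subset (minConvex_minconvHull _)
    rintro D (rfl | rfl)
    · exact subset_minconvHull _ (Set.mem_insert _ _)
    · exact minconvHull_subset (minConvex_minconvHull _)
        ((Set.subset_insert _ _).trans (subset_minconvHull _)) hC
end
end

section
/- Let K = ℂ((t)), O = ℂ[[t]]. The min-convex hull of any finite set of homothety classes of O-lattices in K^n is a finite set. (Dually, the max-convex hull, defined using sums of lattices, is finite.) -/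
set_option maxHeartbeats 1000000
set_option synthInstance.maxHeartbeats 1000000

open Pointwise

noncomputable section

/-- Max-convexity: closure under classes of finite sums of representatives. -/
def MaxConvex {n : ℕ} (X : Set (LatClass n)) : Prop :=
  ∀ (k : ℕ) (Ls : Fin (k + 1) → Submodule O (V n)),
    (∀ i, (⟦Ls i⟧ : LatClass n) ∈ X) → (⟦⨆ i, Ls i⟧ : LatClass n) ∈ X

/-- The max-convex hull of a set of lattice classes. -/
def maxconvHull {n : ℕ} (S : Set (LatClass n)) : Set (LatClass n) :=
  ⋂₀ {X | MaxConvex X ∧ S ⊆ X}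

section helpers

variable {n : ℕ}

lemma mem_smulc_iff {c : K} (hc : c ≠ 0) {L : Submodule O (V n)} {x : V n} :
    x ∈ c • L ↔ c⁻¹ • x ∈ L := by
  constructor
  · rintro ⟨y, hy, rfl⟩
    simpa [inv_smul_smul₀ hc] using hy
  · intro h
    exact ⟨c⁻¹ • x, h, smul_inv_smul₀ hc x⟩

lemma smulc_iInf {ι : Sort*} [Nonempty ι] {c : K} (hc : c ≠ 0) (L : ι → Submodule O (V n)) :
    c • (⨅ i, L i) = ⨅ i, c • L i := by
  ext x
  simp only [mem_smulc_iff hc, Submodule.mem_iInf]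

lemma smulc_iSup {ι : Sort*} {c : K} (hc : c ≠ 0) (L : ι → Submodule O (V n)) :
    c • (⨆ i, L i) = ⨆ i, c • L i :=
  Submodule.map_iSup (DistribMulAction.toLinearMap O (V n) c) L

lemma exists_pow_mul_mem (c : K) : ∃ (m : ℕ) (r : O), tK ^ (m : ℤ) * c = algebraMap O K r := by
  obtain ⟨a, b, hb, rfl⟩ := IsFractionRing.div_surjective (A := O) c
  have hb0 : b ≠ 0 := nonZeroDivisors.ne_zero hb
  set d := b.order.lift (PowerSeries.order_finite_iff_ne_zero.mpr hb0) with hd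
  obtain ⟨u, hu⟩ := PowerSeries.isUnit_divided_by_X_pow_order hb0
  have hbdec : PowerSeries.X ^ d * (u : O) = b := by
    rw [hu, hd, ENat.lift_eq_toNat_of_lt_top]; exact PowerSeries.X_pow_order_mul_divXPowOrder
  refine ⟨d, a * ↑u⁻¹, ?_⟩
  have hbK : algebraMap O K b ≠ 0 :=
    (map_ne_zero_iff _ (IsFractionRing.injective O K)).2 hb0
  rw [zpow_natCast]
  rw [mul_div_assoc', div_eq_iff hbK, tK, ← map_pow, ← map_mul, ← map_mul]
  congr 1
  calc PowerSeries.X ^ d * a = a * (↑u⁻¹ * ↑u) * PowerSeries.X ^ d := by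
        rw [Units.inv_mul]; ring
    _ = a * ↑u⁻¹ * b := by rw [← hbdec]; ring

lemma vsmul_smul (a b : K) (y : V n) : a • b • y = (a * b) • y := smul_smul a b y

lemma vsmul_add (a : K) (y z : V n) : a • (y + z) = a • y + a • z := smul_add a y z

lemma valgebra_smul (r : O) (y : V n) : (algebraMap O K r) • y = r • y := algebraMap_smul K r y

lemma vsmul_comm (r : O) (a : K) (y : V n) : a • r • y = r • a • y := smul_comm a r y

lemma natpow_smul_le (m : ℕ) (L : Submodule O (V n)) : (tK ^ (m : ℤ)) • L ≤ L := by
  rintro _ ⟨y, hy, rfl⟩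
  show (tK ^ (m : ℤ)) • y ∈ L
  have h : (tK ^ (m : ℤ)) • y = (PowerSeries.X ^ m : O) • y := by
    rw [zpow_natCast, show tK = algebraMap O K PowerSeries.X from rfl, ← map_pow]
    exact valgebra_smul _ _
  rw [h]
  exact L.smul_mem _ hy

lemma smulc_mono {c : K} {L L' : Submodule O (V n)} (h : L ≤ L') : c • L ≤ c • L' := by
  rintro _ ⟨y, hy, rfl⟩
  exact Submodule.smul_mem_pointwise_smul y c L' (h hy)

lemma pow_smul_mono {a b : ℤ} (h : a ≤ b) (L : Submodule O (V n)) :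
    tK ^ b • L ≤ tK ^ a • L := by
  have e : tK ^ b • L = tK ^ a • ((tK ^ (((b - a).toNat : ℕ) : ℤ)) • L) := by
    rw [smul_smul, ← zpow_add₀ tK_ne_zero]
    congr 2
    omega
  rw [e]
  exact smulc_mono (natpow_smul_le _ L)

lemma smulc_le_smulc_iff {c : K} (hc : c ≠ 0) {L L' : Submodule O (V n)} :
    c • L ≤ c • L' ↔ L ≤ L' := by
  constructor
  · intro h x hx
    have h2 := h (Submodule.smul_mem_pointwise_smul x c L hx)
    rwa [mem_smulc_iff hc, inv_smul_smul₀ hc] at h2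
  · exact smulc_mono

lemma mem_step {m m' : ℕ} (h : m ≤ m') {L : Submodule O (V n)} {x : V n}
    (hx : tK ^ (m : ℤ) • x ∈ L) : tK ^ (m' : ℤ) • x ∈ L := by
  have e : tK ^ (m' : ℤ) • x = tK ^ (((m' - m : ℕ)) : ℤ) • (tK ^ (m : ℤ) • x) := by
    rw [vsmul_smul, ← zpow_add₀ tK_ne_zero]
    have h2 : (((m' - m : ℕ)) : ℤ) + (m : ℤ) = (m' : ℤ) := by omega
    rw [h2]
  rw [e]
  exact natpow_smul_le _ L ⟨_, hx, rfl⟩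

lemma exists_pow_smul_mem {L : Submodule O (V n)} (hL : Submodule.span K (L : Set (V n)) = ⊤)
    (x : V n) : ∃ m : ℕ, tK ^ (m : ℤ) • x ∈ L := by
  have hx : x ∈ Submodule.span K (L : Set (V n)) := by rw [hL]; trivial
  induction hx using Submodule.span_induction with
  | mem y hy => exact ⟨0, by simpa using hy⟩
  | zero => exact ⟨0, by simp⟩
  | add y z _ _ hy hz =>
    obtain ⟨m₁, h₁⟩ := hy
    obtain ⟨m₂, h₂⟩ := hz
    refine ⟨max m₁ m₂, ?_⟩
    rw [vsmul_add]
    exact L.add_mem (mem_step (le_max_left _ _) h₁) (mem_step (le_max_right _ _) h₂)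
  | smul c y _ hy =>
    obtain ⟨m, hm⟩ := hy
    obtain ⟨m', r, hr⟩ := exists_pow_mul_mem c
    refine ⟨m' + m, ?_⟩
    have e : tK ^ (((m' + m : ℕ)) : ℤ) • (c • y) = r • (tK ^ (m : ℤ) • y) :=
      calc tK ^ (((m' + m : ℕ)) : ℤ) • (c • y)
          = (tK ^ (m' : ℤ) * tK ^ (m : ℤ)) • (c • y) := by
            rw [← zpow_add₀ tK_ne_zero]; norm_cast
        _ = ((tK ^ (m' : ℤ) * tK ^ (m : ℤ)) * c) • y := vsmul_smul _ _ _
        _ = ((tK ^ (m' : ℤ) * c) * tK ^ (m : ℤ)) • y := congrArg (· • y) (by ring)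
        _ = (tK ^ (m' : ℤ) * c) • (tK ^ (m : ℤ) • y) := (vsmul_smul _ _ _).symm
        _ = (algebraMap O K r) • (tK ^ (m : ℤ) • y) := by rw [hr]
        _ = r • (tK ^ (m : ℤ) • y) := valgebra_smul _ _
    rw [e]
    exact L.smul_mem _ hm

lemma exists_pow_smul_le {L L' : Submodule O (V n)}
    (hspan : Submodule.span K (L : Set (V n)) = ⊤) (hfg : L'.FG) :
    ∃ N : ℕ, tK ^ (N : ℤ) • L' ≤ L := by
  obtain ⟨s, hs⟩ := hfg
  choose f hf using fun x : V n => exists_pow_smul_mem hspan x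
  refine ⟨s.sup f, ?_⟩
  rintro _ ⟨y, hy, rfl⟩
  show tK ^ ((s.sup f : ℕ) : ℤ) • y ∈ L
  rw [← hs] at hy
  induction hy using Submodule.span_induction with
  | mem z hz => exact mem_step (Finset.le_sup hz) (hf z)
  | zero =>
    have e : tK ^ ((s.sup f : ℕ) : ℤ) • (0 : V n) = 0 := smul_zero _
    rw [e]; exact L.zero_mem
  | add y z _ _ hy hz => rw [vsmul_add]; exact L.add_mem hy hz
  | smul r z _ hz => rw [vsmul_comm]; exact L.smul_mem _ hz

lemma exists_uniform_N {k : ℕ} (Ls : Fin (k + 1) → Submodule O (V n))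
    (hLs : ∀ i, IsLattice (Ls i)) :
    ∃ N : ℕ, ∀ i j, tK ^ (N : ℤ) • Ls j ≤ Ls i := by
  choose g hg using fun p : Fin (k + 1) × Fin (k + 1) =>
    exists_pow_smul_le (hLs p.1).2 (hLs p.2).1
  refine ⟨Finset.univ.sup g, fun i j => le_trans ?_ (hg (i, j))⟩
  exact pow_smul_mono (by exact_mod_cast Finset.le_sup (Finset.mem_univ (i, j))) _

lemma smulz_add (a b : ℤ) (L : Submodule O (V n)) :
    tK ^ a • tK ^ b • L = tK ^ (a + b) • L := by
  rw [smul_smul, ← zpow_add₀ tK_ne_zero]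

lemma le_smul_neg {N : ℤ} {L L' : Submodule O (V n)} (h : tK ^ N • L' ≤ L) :
    L' ≤ tK ^ (-N) • L := by
  intro x hx
  rw [mem_smulc_iff (zpow_ne_zero _ tK_ne_zero)]
  have e : (tK ^ (-N))⁻¹ • x = tK ^ N • x := congrArg (· • x) (by rw [zpow_neg, inv_inv])
  rw [e]
  exact h (Submodule.smul_mem_pointwise_smul x _ L' hx)

lemma iInf_pow_smul_collapse {m : ℕ} (e : Fin (m + 1) → ℤ) (L : Submodule O (V n)) :
    (⨅ j, tK ^ (e j) • L) = tK ^ (Finset.univ.sup' Finset.univ_nonempty e) • L := by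
  apply le_antisymm
  · obtain ⟨j0, _, hj0⟩ := Finset.exists_mem_eq_sup' Finset.univ_nonempty e
    rw [hj0]
    exact iInf_le (fun j => tK ^ (e j) • L) j0
  · exact le_iInf fun j => pow_smul_mono (Finset.le_sup' e (Finset.mem_univ j)) L

lemma iSup_pow_smul_collapse {m : ℕ} (e : Fin (m + 1) → ℤ) (L : Submodule O (V n)) :
    (⨆ j, tK ^ (e j) • L) = tK ^ (Finset.univ.inf' Finset.univ_nonempty e) • L := by
  apply le_antisymm
  · exact iSup_le fun j => pow_smul_mono (Finset.inf'_le e (Finset.mem_univ j)) L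
  · obtain ⟨j0, _, hj0⟩ := Finset.exists_mem_eq_inf' Finset.univ_nonempty e
    rw [hj0]
    exact le_iSup (fun j => tK ^ (e j) • L) j0

end helpers

/-- The min-convex hull (and dually the max-convex hull) of a finite set of classes of
`O`-lattices is finite. -/
theorem minconvHull_finite_and_maxconvHull_finite {n k : ℕ}
    (Ls : Fin (k + 1) → Submodule O (V n)) (hLs : ∀ i, IsLattice (Ls i)) :
    (minconvHull (Set.range fun i => (⟦Ls i⟧ : LatClass n))).Finite ∧
    (maxconvHull (Set.range fun i => (⟦Ls i⟧ : LatClass n))).Finite := by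
  obtain ⟨N, hN⟩ := exists_uniform_N Ls hLs
  constructor
  · -- min part
    set X : Set (LatClass n) :=
      Set.range (fun a : Fin (k + 1) → ℤ => (⟦⨅ i, tK ^ (a i) • Ls i⟧ : LatClass n)) with hX
    have hXmin : MinConvex X := by
      intro m Ms hMs
      simp only [hX, Set.mem_range] at hMs
      choose a ha using hMs
      have hhom : ∀ j, Homothetic (⨅ i, tK ^ (a j i) • Ls i) (Ms j) :=
        fun j => Quotient.eq.mp (ha j)
      choose c hc using hhom
      have hMsj : ∀ j, Ms j = ⨅ i, tK ^ (c j + a j i) • Ls i := by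
        intro j
        rw [hc j, smulc_iInf (zpow_ne_zero _ tK_ne_zero)]
        exact iInf_congr fun i => smulz_add _ _ _
      refine ⟨fun i => Finset.univ.sup' Finset.univ_nonempty (fun j => c j + a j i), ?_⟩
      have e : (⨅ j, Ms j)
          = ⨅ i, tK ^ (Finset.univ.sup' Finset.univ_nonempty (fun j => c j + a j i)) • Ls i :=
        calc (⨅ j, Ms j) = ⨅ j, ⨅ i, tK ^ (c j + a j i) • Ls i := iInf_congr hMsj
          _ = ⨅ i, ⨅ j, tK ^ (c j + a j i) • Ls i := iInf_comm
          _ = _ := iInf_congr fun i => iInf_pow_smul_collapse _ _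
      rw [e]
    have hXsub : (Set.range fun i => (⟦Ls i⟧ : LatClass n)) ⊆ X := by
      rintro _ ⟨i0, rfl⟩
      refine ⟨fun i => if i = i0 then 0 else -(N : ℤ), ?_⟩
      have e : (⨅ i, tK ^ (if i = i0 then (0 : ℤ) else -(N : ℤ)) • Ls i) = Ls i0 := by
        apply le_antisymm
        · have h := iInf_le (fun i => tK ^ (if i = i0 then (0 : ℤ) else -(N : ℤ)) • Ls i) i0
          simpa using h
        · refine le_iInf fun i => ?_
          by_cases h : i = i0
          · subst h; simp
          · simp only [if_neg h]
            exact le_smul_neg (hN i i0)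
      show (⟦⨅ i, tK ^ (if i = i0 then (0 : ℤ) else -(N : ℤ)) • Ls i⟧ : LatClass n) = ⟦Ls i0⟧
      rw [e]
    have hXfin : X.Finite := by
      have hsub2 : X ⊆ Set.range (fun c : Fin (k + 1) → Fin (N + 1) =>
          (⟦⨅ i, tK ^ ((c i : ℕ) : ℤ) • Ls i⟧ : LatClass n)) := by
        rintro _ ⟨a, rfl⟩
        set m := Finset.univ.sup' Finset.univ_nonempty a with hm
        set b : Fin (k + 1) → ℤ := fun i => max (a i) (m - N) with hb
        have ham : ∀ i, a i ≤ m := fun i => Finset.le_sup' a (Finset.mem_univ i)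
        have hbm : ∀ i, b i ≤ m := fun i => max_le (ham i) (by omega)
        have hbge : ∀ i, m - N ≤ b i := fun i => le_max_right _ _
        have e1 : (⨅ i, tK ^ (a i) • Ls i) = ⨅ i, tK ^ (b i) • Ls i := by
          apply le_antisymm
          · refine le_iInf fun i => ?_
            rcases le_or_gt (m - N) (a i) with h | h
            · have hbi : b i = a i := max_eq_left h
              rw [hbi]
              exact iInf_le _ i
            · have hbi : b i = m - N := max_eq_right h.le
              obtain ⟨imax, _, himax⟩ := Finset.exists_mem_eq_sup' Finset.univ_nonempty a
              refine le_trans (iInf_le _ imax) ?_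
              rw [hbi]
              have e2 : tK ^ (a imax) • Ls imax = tK ^ (m - N) • (tK ^ ((N : ℕ) : ℤ) • Ls imax) := by
                rw [smulz_add]
                have : a imax = m - N + (N : ℤ) := by rw [hm, himax]; ring
                rw [← this]
              rw [e2]
              exact smulc_mono (hN i imax)
          · exact le_iInf fun i => le_trans (iInf_le _ i) (pow_smul_mono (le_max_left _ _) _)
        have hlt : ∀ i, (b i - (m - N)).toNat < N + 1 := fun i => by
          have h1 := hbm i; have h2 := hbge i; omega
        refine ⟨fun i => ⟨(b i - (m - N)).toNat, hlt i⟩, ?_⟩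
        apply Quotient.sound
        refine ⟨m - N, ?_⟩
        rw [e1, smulc_iInf (zpow_ne_zero _ tK_ne_zero)]
        refine iInf_congr fun i => ?_
        rw [smulz_add]
        have : m - N + (((b i - (m - N)).toNat : ℕ) : ℤ) = b i := by
          have h2 := hbge i; omega
        rw [this]
      exact (Set.finite_range _).subset hsub2
    exact hXfin.subset (Set.sInter_subset_of_mem ⟨hXmin, hXsub⟩)
  · -- max part
    set X : Set (LatClass n) :=
      Set.range (fun a : Fin (k + 1) → ℤ => (⟦⨆ i, tK ^ (a i) • Ls i⟧ : LatClass n)) with hX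
    have hXmax : MaxConvex X := by
      intro m Ms hMs
      simp only [hX, Set.mem_range] at hMs
      choose a ha using hMs
      have hhom : ∀ j, Homothetic (⨆ i, tK ^ (a j i) • Ls i) (Ms j) :=
        fun j => Quotient.eq.mp (ha j)
      choose c hc using hhom
      have hMsj : ∀ j, Ms j = ⨆ i, tK ^ (c j + a j i) • Ls i := by
        intro j
        rw [hc j, smulc_iSup (zpow_ne_zero _ tK_ne_zero)]
        exact iSup_congr fun i => smulz_add _ _ _
      refine ⟨fun i => Finset.univ.inf' Finset.univ_nonempty (fun j => c j + a j i), ?_⟩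
      have e : (⨆ j, Ms j)
          = ⨆ i, tK ^ (Finset.univ.inf' Finset.univ_nonempty (fun j => c j + a j i)) • Ls i :=
        calc (⨆ j, Ms j) = ⨆ j, ⨆ i, tK ^ (c j + a j i) • Ls i := iSup_congr hMsj
          _ = ⨆ i, ⨆ j, tK ^ (c j + a j i) • Ls i := iSup_comm
          _ = _ := iSup_congr fun i => iSup_pow_smul_collapse _ _
      rw [e]
    have hXsub : (Set.range fun i => (⟦Ls i⟧ : LatClass n)) ⊆ X := by
      rintro _ ⟨i0, rfl⟩
      refine ⟨fun i => if i = i0 then 0 else (N : ℤ), ?_⟩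
      have e : (⨆ i, tK ^ (if i = i0 then (0 : ℤ) else (N : ℤ)) • Ls i) = Ls i0 := by
        apply le_antisymm
        · refine iSup_le fun i => ?_
          by_cases h : i = i0
          · subst h; simp
          · simp only [if_neg h]
            exact hN i0 i
        · have h := le_iSup (fun i => tK ^ (if i = i0 then (0 : ℤ) else (N : ℤ)) • Ls i) i0
          simpa using h
      show (⟦⨆ i, tK ^ (if i = i0 then (0 : ℤ) else (N : ℤ)) • Ls i⟧ : LatClass n) = ⟦Ls i0⟧
      rw [e]
    have hXfin : X.Finite := by
      have hsub2 : X ⊆ Set.range (fun c : Fin (k + 1) → Fin (N + 1) =>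
          (⟦⨆ i, tK ^ ((c i : ℕ) : ℤ) • Ls i⟧ : LatClass n)) := by
        rintro _ ⟨a, rfl⟩
        set m := Finset.univ.inf' Finset.univ_nonempty a with hm
        set b : Fin (k + 1) → ℤ := fun i => min (a i) (m + N) with hb
        have ham : ∀ i, m ≤ a i := fun i => Finset.inf'_le a (Finset.mem_univ i)
        have hbm : ∀ i, m ≤ b i := fun i => le_min (ham i) (by omega)
        have hble : ∀ i, b i ≤ m + N := fun i => min_le_right _ _
        have e1 : (⨆ i, tK ^ (a i) • Ls i) = ⨆ i, tK ^ (b i) • Ls i := by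
          apply le_antisymm
          · refine iSup_le fun i => ?_
            have hba : b i ≤ a i := min_le_left _ _
            exact le_trans (pow_smul_mono hba _) (le_iSup (fun j => tK ^ (b j) • Ls j) i)
          · refine iSup_le fun i => ?_
            rcases le_or_gt (a i) (m + N) with h | h
            · have hbi : b i = a i := min_eq_left h
              rw [hbi]
              exact le_iSup (fun j => tK ^ (a j) • Ls j) i
            · have hbi : b i = m + N := min_eq_right h.le
              obtain ⟨imin, _, himin⟩ := Finset.exists_mem_eq_inf' Finset.univ_nonempty a
              refine le_trans ?_ (le_iSup (fun i => tK ^ (a i) • Ls i) imin)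
              rw [hbi]
              have e2 : tK ^ (m + N) • Ls i = tK ^ (a imin) • (tK ^ ((N : ℕ) : ℤ) • Ls i) := by
                rw [smulz_add]
                have : m + (N : ℤ) = a imin + N := by rw [hm, himin]
                rw [this]
              rw [e2]
              exact smulc_mono (hN imin i)
        have hlt : ∀ i, (b i - m).toNat < N + 1 := fun i => by
          have h1 := hbm i; have h2 := hble i; omega
        refine ⟨fun i => ⟨(b i - m).toNat, hlt i⟩, ?_⟩
        apply Quotient.sound
        refine ⟨m, ?_⟩
        rw [e1, smulc_iSup (zpow_ne_zero _ tK_ne_zero)]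
        refine iSup_congr fun i => ?_
        rw [smulz_add]
        have : m + (((b i - m).toNat : ℕ) : ℤ) = b i := by
          have h2 := hbm i; omega
        rw [this]
      exact (Set.finite_range _).subset hsub2
    exact hXfin.subset (Set.sInter_subset_of_mem ⟨hXmax, hXsub⟩)
end
end

section
/- In a cylindrical growth diagram for SL₃ with γ_{i,i+1} = ω₂ = (1,1,0): for every j with i+1 ≤ j ≤ i+n, the set dif(γ_{i,j}, γ_{i+1,j}) of rows where the two partitions differ has exactly 2 elements; it equals {1,2} at j = i+1, equals {2,3} at j = i+n, and is monotonically increasing in j with respect to the order {1,2} < {1,3} < {2,3}. -/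
noncomputable section

/-- Sort a triple of integers into weakly decreasing order. -/
def sort3 (x : Fin 3 → ℤ) : Fin 3 → ℤ :=
  ![max (max (x 0) (x 1)) (x 2),
    x 0 + x 1 + x 2 - max (max (x 0) (x 1)) (x 2) - min (min (x 0) (x 1)) (x 2),
    min (min (x 0) (x 1)) (x 2)]

/-- A cylindrical growth diagram for `SL₃` of shape the `3 × k` rectangle `(k,k,k)`, on
the (periodically extended) staircase `{(i,j) : i ≤ j ≤ i + n}`.  Each entry `γ i j` is a
partition with at most three parts; the entries vanish on the diagonal, equal the full
rectangle at `j = i + n`, neighboring entries differ by vertical strips, the local growth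
rule `γ_{i+1,j+1} = sort(γ_{i+1,j} + γ_{i,j+1} - γ_{i,j})` holds on every unit square,
and the diagram is periodic: `γ_{i+n,j+n} = γ_{i,j}`. -/
structure CylGrowthDiagram (n k : ℕ) where
  γ : ℤ → ℤ → Fin 3 → ℤ
  nonneg : ∀ i j : ℤ, i ≤ j → j ≤ i + n → ∀ r, 0 ≤ γ i j r
  antitone : ∀ i j : ℤ, i ≤ j → j ≤ i + n → γ i j 1 ≤ γ i j 0 ∧ γ i j 2 ≤ γ i j 1
  diag : ∀ i : ℤ, γ i i = fun _ => 0
  rect : ∀ i : ℤ, γ i (i + n) = fun _ => (k : ℤ)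
  vstrip_col : ∀ i j : ℤ, i + 1 ≤ j → j ≤ i + n →
    ∀ r, γ (i + 1) j r ≤ γ i j r ∧ γ i j r ≤ γ (i + 1) j r + 1
  vstrip_row : ∀ i j : ℤ, i ≤ j → j + 1 ≤ i + n →
    ∀ r, γ i j r ≤ γ i (j + 1) r ∧ γ i (j + 1) r ≤ γ i j r + 1
  locRule : ∀ i j : ℤ, i + 1 ≤ j → j + 1 ≤ i + n →
    γ (i + 1) (j + 1) = sort3 (fun r => γ (i + 1) j r + γ i (j + 1) r - γ i j r)
  periodic : ∀ i j : ℤ, γ (i + n) (j + n) = γ i j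

/-- If `γ_{i,i+1} = ω₂ = (1,1,0)`, then for each `j` with `i+1 ≤ j ≤ i+n` the set
`dif(γ_{i,j}, γ_{i+1,j})` of rows where the two partitions differ (by one box) has exactly
two elements; it equals `{1,2}` at `j = i+1`, equals `{2,3}` at `j = i+n` (rows indexed
`0,1,2` here), and increases monotonically in `j` with respect to the total order
`{1,2} < {1,3} < {2,3}`, which is faithfully encoded by the sum of the row indices. -/
theorem dif_pair_monotone {n k : ℕ} (D : CylGrowthDiagram n k) (i : ℤ)
    (h : D.γ i (i + 1) = ![1, 1, 0]) :
    ∃ Df : ℤ → Finset (Fin 3),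
      (∀ j : ℤ, i + 1 ≤ j → j ≤ i + n →
        (Df j).card = 2 ∧
        ∀ s, D.γ i j s = D.γ (i + 1) j s + if s ∈ Df j then 1 else 0) ∧
      Df (i + 1) = {0, 1} ∧ Df (i + n) = {1, 2} ∧
      (∀ j j' : ℤ, i + 1 ≤ j → j ≤ j' → j' ≤ i + n →
        ∑ s ∈ Df j, (s : ℕ) ≤ ∑ s ∈ Df j', (s : ℕ)) := by
  classical
  -- n = 1 is impossible
  by_cases hn1 : (n : ℤ) = 1
  · exfalso
    have hr := D.rect i
    rw [hn1] at hr
    have e0 : D.γ i (i + 1) 0 = (k : ℤ) := by rw [hr]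
    have e2 : D.γ i (i + 1) 2 = (k : ℤ) := by rw [hr]
    rw [h] at e0 e2
    simp at e0 e2
    omega
  -- total box count of the strip is constant, equal to 2
  have hsum : ∀ j : ℤ, i + 1 ≤ j → j ≤ i + (n : ℤ) →
      (D.γ i j 0 - D.γ (i+1) j 0) + (D.γ i j 1 - D.γ (i+1) j 1)
        + (D.γ i j 2 - D.γ (i+1) j 2) = 2 := by
    intro j hj
    refine Int.le_induction (motive := fun j _ => j ≤ i + (n : ℤ) →
      (D.γ i j 0 - D.γ (i+1) j 0) + (D.γ i j 1 - D.γ (i+1) j 1)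
        + (D.γ i j 2 - D.γ (i+1) j 2) = 2) ?_ ?_ j hj
    · intro _
      rw [h, D.diag]
      norm_num
      decide
    · intro j hj ih hj1
      have hIH := ih (by omega)
      have hloc := D.locRule i j hj (by omega)
      have e0 : D.γ (i+1) (j+1) 0 = _ := congrFun hloc 0
      have e1 : D.γ (i+1) (j+1) 1 = _ := congrFun hloc 1
      have e2 : D.γ (i+1) (j+1) 2 = _ := congrFun hloc 2
      simp only [sort3, Matrix.cons_val_zero, Matrix.cons_val_one, Matrix.head_cons,
        Matrix.cons_val_two, Matrix.tail_cons] at e0 e1 e2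
      omega
  have hbd : ∀ j : ℤ, i + 1 ≤ j → j ≤ i + (n : ℤ) → ∀ r,
      D.γ (i+1) j r ≤ D.γ i j r ∧ D.γ i j r ≤ D.γ (i+1) j r + 1 :=
    fun j h1 h2 => D.vstrip_col i j h1 h2
  -- the two-step lemma ruling out decreasing transitions
  have hstep : ∀ j : ℤ, i + 1 ≤ j → j + 1 ≤ i + (n : ℤ) →
      (D.γ i j 2 = D.γ (i+1) j 2 + 1 → D.γ i (j+1) 2 = D.γ (i+1) (j+1) 2 + 1) ∧
      ((D.γ i j 1 = D.γ (i+1) j 1 + 1 ∧ D.γ i j 2 = D.γ (i+1) j 2 + 1) →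
        D.γ i (j+1) 1 = D.γ (i+1) (j+1) 1 + 1) := by
    intro j h1 h2
    have hloc := D.locRule i j h1 h2
    have e1 : D.γ (i+1) (j+1) 1 = _ := congrFun hloc 1
    have e2 : D.γ (i+1) (j+1) 2 = _ := congrFun hloc 2
    simp only [sort3, Matrix.cons_val_zero, Matrix.cons_val_one, Matrix.head_cons,
      Matrix.cons_val_two, Matrix.tail_cons] at e1 e2
    have hs := hsum j h1 (by omega)
    have b0 := hbd j h1 (by omega) 0
    have b1 := hbd j h1 (by omega) 1
    have b2 := hbd j h1 (by omega) 2
    have c1 := hbd (j+1) (by omega) h2 1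
    have c2 := hbd (j+1) (by omega) h2 2
    have hant := D.antitone i (j+1) (by omega) (by omega)
    omega
  -- at the end of the strip the pattern is {1,2}
  have hend : ∀ j : ℤ, i + 1 ≤ j → j = i + (n : ℤ) →
      D.γ i j 0 = D.γ (i+1) j 0 ∧ D.γ i j 1 = D.γ (i+1) j 1 + 1 ∧
        D.γ i j 2 = D.γ (i+1) j 2 + 1 := by
    intro j h1 hj
    have hs := hsum j h1 (le_of_eq hj)
    have b0 := hbd j h1 (le_of_eq hj) 0
    have b1 := hbd j h1 (le_of_eq hj) 1
    have b2 := hbd j h1 (le_of_eq hj) 2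
    have hant := D.antitone (i+1) j (by omega) (by omega)
    have hr := D.rect i
    have r0 : D.γ i j 0 = (k : ℤ) := by rw [hj, hr]
    have r1 : D.γ i j 1 = (k : ℤ) := by rw [hj, hr]
    have r2 : D.γ i j 2 = (k : ℤ) := by rw [hj, hr]
    omega
  -- the candidate function
  set F : ℤ → Finset (Fin 3) := fun j =>
    if j = i + (n : ℤ) then ({1, 2} : Finset (Fin 3))
    else Finset.univ.filter fun s => D.γ (i+1) j s < D.γ i j s with hF
  -- membership characterization on the strip
  have hmem : ∀ j : ℤ, i + 1 ≤ j → j ≤ i + (n : ℤ) → ∀ s : Fin 3,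
      (s ∈ F j ↔ D.γ (i+1) j s < D.γ i j s) := by
    intro j h1 h2 s
    by_cases hj : j = i + (n : ℤ)
    · rw [hF]
      simp only [if_pos hj]
      obtain ⟨e0, e1, e2⟩ := hend j h1 hj
      fin_cases s <;> simp <;> omega
    · rw [hF]
      simp only [if_neg hj, Finset.mem_filter, Finset.mem_univ, true_and]
  -- the set is always one of the three vertical-strip patterns
  have hset3 : ∀ j : ℤ, i + 1 ≤ j → j ≤ i + (n : ℤ) →
      (F j = {0, 1} ∧ (D.γ i j 0 = D.γ (i+1) j 0 + 1 ∧ D.γ i j 1 = D.γ (i+1) j 1 + 1 ∧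
        D.γ i j 2 = D.γ (i+1) j 2)) ∨
      (F j = {0, 2} ∧ (D.γ i j 0 = D.γ (i+1) j 0 + 1 ∧ D.γ i j 1 = D.γ (i+1) j 1 ∧
        D.γ i j 2 = D.γ (i+1) j 2 + 1)) ∨
      (F j = {1, 2} ∧ (D.γ i j 0 = D.γ (i+1) j 0 ∧ D.γ i j 1 = D.γ (i+1) j 1 + 1 ∧
        D.γ i j 2 = D.γ (i+1) j 2 + 1)) := by
    intro j h1 h2
    have hs := hsum j h1 h2
    have b0 := hbd j h1 h2 0
    have b1 := hbd j h1 h2 1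
    have b2 := hbd j h1 h2 2
    have hm := hmem j h1 h2
    have hp : (D.γ i j 0 = D.γ (i+1) j 0 + 1 ∧ D.γ i j 1 = D.γ (i+1) j 1 + 1 ∧
        D.γ i j 2 = D.γ (i+1) j 2) ∨
      (D.γ i j 0 = D.γ (i+1) j 0 + 1 ∧ D.γ i j 1 = D.γ (i+1) j 1 ∧
        D.γ i j 2 = D.γ (i+1) j 2 + 1) ∨
      (D.γ i j 0 = D.γ (i+1) j 0 ∧ D.γ i j 1 = D.γ (i+1) j 1 + 1 ∧
        D.γ i j 2 = D.γ (i+1) j 2 + 1) := by omega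
    rcases hp with ⟨e0, e1, e2⟩ | ⟨e0, e1, e2⟩ | ⟨e0, e1, e2⟩
    · left
      refine ⟨?_, e0, e1, e2⟩
      ext s
      rw [hm s]
      fin_cases s <;> simp <;> omega
    · right; left
      refine ⟨?_, e0, e1, e2⟩
      ext s
      rw [hm s]
      fin_cases s <;> simp <;> omega
    · right; right
      refine ⟨?_, e0, e1, e2⟩
      ext s
      rw [hm s]
      fin_cases s <;> simp <;> omega
  refine ⟨F, ?_, ?_, ?_, ?_⟩
  · -- cardinality and strip equation
    intro j h1 h2
    constructor
    · rcases hset3 j h1 h2 with ⟨hs, -⟩ | ⟨hs, -⟩ | ⟨hs, -⟩ <;> rw [hs] <;> decide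
    · intro s
      have hb := hbd j h1 h2 s
      have hm := hmem j h1 h2 s
      by_cases hs : s ∈ F j
      · rw [if_pos hs]; rw [hm] at hs; omega
      · rw [if_neg hs]; rw [hm] at hs; omega
  · -- value at i + 1
    have hne : i + 1 ≠ i + (n : ℤ) := by omega
    rw [hF]
    simp only [if_neg hne]
    rw [h, D.diag]
    decide
  · -- value at i + n
    rw [hF]
    simp
  · -- monotonicity
    intro j j' h1 hjj h2
    revert h2
    refine Int.le_induction (motive := fun j' _ => j' ≤ i + (n : ℤ) →
      ∑ s ∈ F j, (s : ℕ) ≤ ∑ s ∈ F j', (s : ℕ)) ?_ ?_ j' hjj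
    · intro _; exact le_rfl
    · intro m hm ih h2
      have h2m : m ≤ i + (n : ℤ) := by omega
      refine le_trans (ih h2m) ?_
      have hst := hstep m (by omega) h2
      rcases hset3 m (by omega) h2m with ⟨sA, pA0, pA1, pA2⟩ | ⟨sA, pA0, pA1, pA2⟩ |
          ⟨sA, pA0, pA1, pA2⟩ <;>
        rcases hset3 (m+1) (by omega) h2 with ⟨sB, pB0, pB1, pB2⟩ | ⟨sB, pB0, pB1, pB2⟩ |
          ⟨sB, pB0, pB1, pB2⟩ <;>
        rw [sA, sB] <;>
        first
          | decide
          | (exfalso; have hx := hst.1 pA2; omega)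
          | (exfalso; have hx := hst.2 ⟨pA1, pA2⟩; omega)
end
end

section
/- In a cylindrical growth diagram for SL₃, the local rule on a unit square determines the southeast entry from the other three: γ_{i+1,j+1} is obtained from γ_{i,j+1} by subtracting 1 in exactly the rows where γ_{i,j} and γ_{i+1,j} differ, then sorting into weakly decreasing order; moreover the result is always a partition (nonnegative, weakly decreasing) and γ_{i,j+1}/γ_{i+1,j+1} is a vertical strip. -/
noncomputable section

/-- The local rule of a growth diagram determines the southeast entry of a unit square:
with `a = γ_{i,j}`, `b = γ_{i+1,j}`, `c = γ_{i,j+1}` partitions (at most three parts)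
such that `a/b` and `c/a` are vertical strips, the entry
`d = sort(b + c - a)` is obtained from `c` by subtracting `1` in exactly the rows where
`a` and `b` differ and sorting; it is always a partition (nonnegative, weakly decreasing),
and `c/d` is a vertical strip. -/
theorem local_rule_determines {a b c : Fin 3 → ℤ}
    (ha : (∀ r, 0 ≤ a r) ∧ a 1 ≤ a 0 ∧ a 2 ≤ a 1)
    (hb : (∀ r, 0 ≤ b r) ∧ b 1 ≤ b 0 ∧ b 2 ≤ b 1)
    (hc : (∀ r, 0 ≤ c r) ∧ c 1 ≤ c 0 ∧ c 2 ≤ c 1)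
    (hab : ∀ r, b r ≤ a r ∧ a r ≤ b r + 1)
    (hca : ∀ r, a r ≤ c r ∧ c r ≤ a r + 1) :
    (sort3 (fun r => b r + c r - a r) = sort3 (fun r => c r - (a r - b r))) ∧
    (∀ r, 0 ≤ sort3 (fun r => b r + c r - a r) r) ∧
    (sort3 (fun r => b r + c r - a r) 1 ≤ sort3 (fun r => b r + c r - a r) 0 ∧
      sort3 (fun r => b r + c r - a r) 2 ≤ sort3 (fun r => b r + c r - a r) 1) ∧
    (∀ r, sort3 (fun r => b r + c r - a r) r ≤ c r ∧
      c r ≤ sort3 (fun r => b r + c r - a r) r + 1) := by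
  obtain ⟨ha0, ha1, ha2⟩ := ha
  obtain ⟨hb0, hb1, hb2⟩ := hb
  obtain ⟨hc0, hc1, hc2⟩ := hc
  have p0 := hb0 0; have p1 := hb0 1; have p2 := hb0 2
  have q0 := hc0 0; have q1 := hc0 1; have q2 := hc0 2
  have n0 := ha0 0; have n1 := ha0 1; have n2 := ha0 2
  have h0 := hab 0; have h1 := hab 1; have h2 := hab 2
  have g0 := hca 0; have g1 := hca 1; have g2 := hca 2
  have hfun : (fun r => c r - (a r - b r)) = (fun r => b r + c r - a r) := by
    funext r; ring
  have s0 : ∀ x, sort3 x 0 = max (max (x 0) (x 1)) (x 2) := fun _ => rfl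
  have s1 : ∀ x, sort3 x 1 = x 0 + x 1 + x 2 - max (max (x 0) (x 1)) (x 2)
      - min (min (x 0) (x 1)) (x 2) := fun _ => rfl
  have s2 : ∀ x, sort3 x 2 = min (min (x 0) (x 1)) (x 2) := fun _ => rfl
  refine ⟨by rw [hfun], ?_, ?_, ?_⟩
  · intro r
    fin_cases r
    · show (0:ℤ) ≤ sort3 (fun r => b r + c r - a r) 0; rw [s0]; omega
    · show (0:ℤ) ≤ sort3 (fun r => b r + c r - a r) 1; rw [s1]; omega
    · show (0:ℤ) ≤ sort3 (fun r => b r + c r - a r) 2; rw [s2]; omega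
  · rw [s0, s1, s2]; constructor <;> omega
  · intro r
    fin_cases r
    · show sort3 (fun r => b r + c r - a r) 0 ≤ c 0 ∧ c 0 ≤ sort3 (fun r => b r + c r - a r) 0 + 1
      rw [s0]; constructor <;> omega
    · show sort3 (fun r => b r + c r - a r) 1 ≤ c 1 ∧ c 1 ≤ sort3 (fun r => b r + c r - a r) 1 + 1
      rw [s1]; constructor <;> omega
    · show sort3 (fun r => b r + c r - a r) 2 ≤ c 2 ∧ c 2 ≤ sort3 (fun r => b r + c r - a r) 2 + 1
      rw [s2]; constructor <;> omega
end
end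

section
/- In the A₂ weight lattice, let x, y be vertices with d(x,y) = aω₁ + bω₂ where a, b ≥ 1. Then the set of vertices lying on combinatorial geodesics from x to y (paths of length a+b of ω₁- and ω₂-steps) is exactly the set of lattice points of a parallelogram; its 'upper' boundary path consisting of b ω₂-steps followed by a ω₁-steps and its 'lower' boundary path of a ω₁-steps followed by b ω₂-steps are the unique geodesics of those step-type sequences. -/
noncomputable section

/-- The `A₂` weight lattice `ℤ³/(1,1,1)`, the vertex set of one apartment of the `A₂`
affine building. -/
abbrev A2 := (Fin 3 → ℤ) ⧸ AddSubgroup.zmultiples (![1, 1, 1] : Fin 3 → ℤ)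

/-- The projection `ℤ³ → ℤ³/(1,1,1)`. -/
def pr : (Fin 3 → ℤ) → A2 := QuotientAddGroup.mk

/-- An `ω₁`-step adds an element of the Weyl orbit of `ω₁ = (1,0,0)`. -/
def Step1 (x y : A2) : Prop :=
  ∃ w ∈ ({![1, 0, 0], ![0, 1, 0], ![0, 0, 1]} : Set (Fin 3 → ℤ)), y = x + pr w

/-- An `ω₂`-step adds an element of the Weyl orbit of `ω₂ = (1,1,0)`. -/
def Step2 (x y : A2) : Prop :=
  ∃ w ∈ ({![1, 1, 0], ![1, 0, 1], ![0, 1, 1]} : Set (Fin 3 → ℤ)), y = x + pr w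

/-- A step of either fundamental type. -/
def Step (x y : A2) : Prop := Step1 x y ∨ Step2 x y

/-- `f` is a lattice path of length `m` from `x` to `y` using `ω₁`- and `ω₂`-steps. -/
def IsPath (f : ℕ → A2) (m : ℕ) (x y : A2) : Prop :=
  f 0 = x ∧ f m = y ∧ ∀ i < m, Step (f i) (f (i + 1))

-- ===== auxiliary development =====
namespace A2aux

def mkhom (c0 c1 c2 : ℤ) : (Fin 3 → ℤ) →+ ℤ where
  toFun p := c0 * p 0 + c1 * p 1 + c2 * p 2
  map_zero' := by simp
  map_add' u v := by simp [Pi.add_apply]; ring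

def lift0 (c0 c1 c2 : ℤ) (h : c0 + c1 + c2 = 0) : A2 →+ ℤ :=
  QuotientAddGroup.lift _ (mkhom c0 c1 c2) (by
    intro v hv
    obtain ⟨k, rfl⟩ := AddSubgroup.mem_zmultiples_iff.mp hv
    show mkhom c0 c1 c2 (k • ![1,1,1]) = 0
    rw [map_zsmul]
    show k • (c0 * (![1,1,1] : Fin 3 → ℤ) 0 + c1 * ![1,1,1] 1 + c2 * ![1,1,1] 2) = 0
    simp only [Matrix.cons_val_zero, Matrix.cons_val_one, Matrix.head_cons,
      Matrix.cons_val_two, Matrix.tail_cons, smul_eq_mul]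
    have e : c0 * 1 + c1 * 1 + c2 * 1 = 0 := by linarith
    rw [e, mul_zero])

def phi1 : A2 →+ ℤ := lift0 1 (-1) 0 (by norm_num)
def phi2 : A2 →+ ℤ := lift0 0 1 (-1) (by norm_num)
def phi3 : A2 →+ ℤ := lift0 1 0 (-1) (by norm_num)

lemma phi1_pr (v : Fin 3 → ℤ) : phi1 (pr v) = v 0 - v 1 := by
  show 1 * v 0 + (-1) * v 1 + 0 * v 2 = v 0 - v 1; ring
lemma phi2_pr (v : Fin 3 → ℤ) : phi2 (pr v) = v 1 - v 2 := by
  show 0 * v 0 + 1 * v 1 + (-1) * v 2 = v 1 - v 2; ring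
lemma phi3_pr (v : Fin 3 → ℤ) : phi3 (pr v) = v 0 - v 2 := by
  show 1 * v 0 + 0 * v 1 + (-1) * v 2 = v 0 - v 2; ring

lemma pr_add (q w : Fin 3 → ℤ) : pr (q + w) = pr q + pr w := rfl

lemma shift (x : A2) (q w : Fin 3 → ℤ) : x + pr (q + w) = (x + pr q) + pr w := by
  rw [pr_add, add_assoc]

-- vector entry computations
lemma vec_entries (s t : ℤ) :
    (s • ![1,0,0] + t • ![(1:ℤ),1,0]) = ![s + t, t, 0] := by
  funext j
  fin_cases j <;>
    simp [Pi.add_apply, Pi.smul_apply, smul_eq_mul]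

lemma vec_entries' (t s : ℤ) :
    (t • ![1,1,0] + s • ![(1:ℤ),0,0]) = ![s + t, t, 0] := by
  funext j
  fin_cases j <;>
    simp [Pi.add_apply, Pi.smul_apply, smul_eq_mul] <;> ring

lemma comb_add_w1 (x : A2) (s t : ℤ) :
    x + pr ((s+1) • ![1,0,0] + t • ![1,1,0]) = (x + pr (s • ![1,0,0] + t • ![1,1,0])) + pr ![1,0,0] := by
  have hv : (s+1) • ![(1:ℤ),0,0] + t • ![(1:ℤ),1,0]
      = (s • ![(1:ℤ),0,0] + t • ![(1:ℤ),1,0]) + ![1,0,0] := by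
    funext j; fin_cases j <;> simp <;> ring
  rw [hv, shift]

lemma comb_add_w2 (x : A2) (s t : ℤ) :
    x + pr (s • ![1,0,0] + (t+1) • ![1,1,0]) = (x + pr (s • ![1,0,0] + t • ![1,1,0])) + pr ![1,1,0] := by
  have hv : s • ![(1:ℤ),0,0] + (t+1) • ![(1:ℤ),1,0]
      = (s • ![(1:ℤ),0,0] + t • ![(1:ℤ),1,0]) + ![1,1,0] := by
    funext j; fin_cases j <;> simp <;> ring
  rw [hv, shift]

lemma comb_zero (x : A2) : x + pr ((0:ℤ) • ![1,0,0] + (0:ℤ) • ![1,1,0]) = x := by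
  simp [pr]

-- step classification
lemma step1_cases {x y : A2} (h : Step1 x y) :
    y = x + pr ![1,0,0] ∨ y = x + pr ![0,1,0] ∨ y = x + pr ![0,0,1] := by
  obtain ⟨w, hw, rfl⟩ := h
  simp only [Set.mem_insert_iff, Set.mem_singleton_iff] at hw
  rcases hw with rfl | rfl | rfl <;> tauto

lemma step2_cases {x y : A2} (h : Step2 x y) :
    y = x + pr ![1,1,0] ∨ y = x + pr ![1,0,1] ∨ y = x + pr ![0,1,1] := by
  obtain ⟨w, hw, rfl⟩ := h
  simp only [Set.mem_insert_iff, Set.mem_singleton_iff] at hw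
  rcases hw with rfl | rfl | rfl <;> tauto

lemma phi3_shift (x : A2) (w : Fin 3 → ℤ) : phi3 (x + pr w) = phi3 x + (w 0 - w 2) := by
  rw [map_add, phi3_pr]

lemma step_phi3_le {x y : A2} (h : Step x y) : phi3 y ≤ phi3 x + 1 := by
  rcases h with h | h
  · rcases step1_cases h with rfl | rfl | rfl <;> rw [phi3_shift] <;> norm_num [Matrix.cons_val_two, Matrix.tail_cons, Matrix.head_cons]
  · rcases step2_cases h with rfl | rfl | rfl <;> rw [phi3_shift] <;> norm_num [Matrix.cons_val_two, Matrix.tail_cons, Matrix.head_cons]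

lemma step1_exact {x y : A2} (h : Step1 x y) (he : phi3 y = phi3 x + 1) :
    y = x + pr ![1,0,0] := by
  rcases step1_cases h with h' | h' | h'
  · exact h'
  all_goals (exfalso; rw [h', phi3_shift] at he; norm_num [Matrix.cons_val_two, Matrix.tail_cons, Matrix.head_cons] at he)

lemma step2_exact {x y : A2} (h : Step2 x y) (he : phi3 y = phi3 x + 1) :
    y = x + pr ![1,1,0] := by
  rcases step2_cases h with h' | h' | h'
  · exact h'
  all_goals (exfalso; rw [h', phi3_shift] at he; norm_num [Matrix.cons_val_two, Matrix.tail_cons, Matrix.head_cons] at he)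

-- telescoping
lemma chain_le (g : ℕ → ℤ) (m : ℕ) (h : ∀ i < m, g (i+1) ≤ g i + 1) :
    ∀ j k, j + k ≤ m → g (j + k) ≤ g j + k := by
  intro j k
  induction k with
  | zero => simp
  | succ n ih =>
    intro hk
    have e : j + (n+1) = (j+n) + 1 := by omega
    rw [e]
    have h1 := ih (by omega)
    have h2 := h (j+n) (by omega)
    push_cast
    omega

lemma chain_mono (g : ℕ → ℤ) (m : ℕ) (h : ∀ i < m, g i ≤ g (i+1)) :
    ∀ j k, j + k ≤ m → g j ≤ g (j + k) := by
  intro j k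
  induction k with
  | zero => simp
  | succ n ih =>
    intro hk
    have e : j + (n+1) = (j+n) + 1 := by omega
    rw [e]
    have h1 := ih (by omega)
    have h2 := h (j+n) (by omega)
    omega

lemma tele (g : ℕ → ℤ) (m : ℕ) (h1 : ∀ i < m, g (i+1) ≤ g i + 1)
    (h2 : g m = g 0 + m) : ∀ i ≤ m, g i = g 0 + i := by
  intro i hi
  have a1 := chain_le g m h1 0 i (by omega)
  rw [Nat.zero_add] at a1
  have a2 := chain_le g m h1 i (m - i) (by omega)
  have e : i + (m - i) = m := by omega
  rw [e] at a2
  omega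


lemma comb_zero' (x : A2) : x + pr ((0:ℤ) • ![1,1,0] + (0:ℤ) • ![1,0,0]) = x := by
  simp [pr]

lemma comb_add_w2' (x : A2) (t s : ℤ) :
    x + pr ((t+1) • ![1,1,0] + s • ![1,0,0]) = (x + pr (t • ![1,1,0] + s • ![1,0,0])) + pr ![1,1,0] := by
  have hv : (t+1) • ![(1:ℤ),1,0] + s • ![(1:ℤ),0,0]
      = (t • ![(1:ℤ),1,0] + s • ![(1:ℤ),0,0]) + ![1,1,0] := by
    funext j; fin_cases j <;> simp <;> ring
  rw [hv, shift]

lemma comb_add_w1' (x : A2) (t s : ℤ) :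
    x + pr (t • ![1,1,0] + (s+1) • ![1,0,0]) = (x + pr (t • ![1,1,0] + s • ![1,0,0])) + pr ![1,0,0] := by
  have hv : t • ![(1:ℤ),1,0] + (s+1) • ![(1:ℤ),0,0]
      = (t • ![(1:ℤ),1,0] + s • ![(1:ℤ),0,0]) + ![1,0,0] := by
    funext j; fin_cases j <;> simp <;> ring
  rw [hv, shift]

lemma phi1_target (x : A2) (a b : ℤ) :
    phi1 (x + pr (a • ![1,0,0] + b • ![1,1,0])) = phi1 x + a := by
  rw [vec_entries, map_add, phi1_pr]; simp

lemma phi2_target (x : A2) (a b : ℤ) :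
    phi2 (x + pr (a • ![1,0,0] + b • ![1,1,0])) = phi2 x + b := by
  rw [vec_entries, map_add, phi2_pr]; simp

lemma phi3_target (x : A2) (a b : ℤ) :
    phi3 (x + pr (a • ![1,0,0] + b • ![1,1,0])) = phi3 x + (a + b) := by
  rw [vec_entries, map_add, phi3_pr]; simp

lemma geo_incr (m : ℕ) (f : ℕ → A2)
    (hm3 : phi3 (f m) = phi3 (f 0) + m)
    (hstep : ∀ i < m, Step (f i) (f (i+1))) :
    ∀ i < m, phi3 (f (i+1)) = phi3 (f i) + 1 := by
  have H := tele (fun i => phi3 (f i)) m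
    (fun i hi => step_phi3_le (hstep i hi)) hm3
  intro i hi
  have a1 := H i (le_of_lt hi)
  have a2 := H (i+1) hi
  push_cast at a2
  omega

lemma geo_ex (m : ℕ) (f : ℕ → A2)
    (hm3 : phi3 (f m) = phi3 (f 0) + m)
    (hstep : ∀ i < m, Step (f i) (f (i+1))) :
    ∀ i < m, f (i+1) = f i + pr ![1,0,0] ∨ f (i+1) = f i + pr ![1,1,0] := by
  intro i hi
  rcases hstep i hi with h | h
  · exact Or.inl (step1_exact h (geo_incr m f hm3 hstep i hi))
  · exact Or.inr (step2_exact h (geo_incr m f hm3 hstep i hi))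

lemma geo_points (a b : ℕ) (x : A2) (f : ℕ → A2)
    (h0 : f 0 = x)
    (hm : f (a+b) = x + pr ((a:ℤ) • ![1,0,0] + (b:ℤ) • ![1,1,0]))
    (hstep : ∀ i < a+b, Step (f i) (f (i+1))) :
    ∀ i ≤ a+b, ∃ s t : ℕ, s ≤ a ∧ t ≤ b ∧ s + t = i ∧
      f i = x + pr ((s:ℤ) • ![1,0,0] + (t:ℤ) • ![1,1,0]) := by
  have hm3 : phi3 (f (a+b)) = phi3 (f 0) + (a+b : ℕ) := by
    rw [hm, h0, phi3_target]; push_cast; ring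
  have hex := geo_ex (a+b) f hm3 hstep
  have key : ∀ i ≤ a+b, ∃ s t : ℕ, s + t = i ∧
      phi1 (f i) = phi1 x + s ∧ phi2 (f i) = phi2 x + t ∧
      f i = x + pr ((s:ℤ) • ![1,0,0] + (t:ℤ) • ![1,1,0]) := by
    intro i
    induction i with
    | zero =>
      intro _
      refine ⟨0, 0, rfl, by simp [h0], by simp [h0], ?_⟩
      rw [h0]; push_cast; exact (comb_zero x).symm
    | succ n ih =>
      intro hn
      obtain ⟨s, t, hst, hp1, hp2, hf⟩ := ih (by omega)
      rcases hex n (by omega) with hw | hw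
      · refine ⟨s+1, t, by omega, ?_, ?_, ?_⟩
        · rw [hw, map_add, phi1_pr, hp1]; simp only [Matrix.cons_val_zero, Matrix.cons_val_one, Matrix.head_cons, Matrix.cons_val_two, Matrix.tail_cons]; push_cast; ring
        · rw [hw, map_add, phi2_pr, hp2]; simp only [Matrix.cons_val_zero, Matrix.cons_val_one, Matrix.head_cons, Matrix.cons_val_two, Matrix.tail_cons]; push_cast; ring
        · rw [hw, hf]; push_cast; exact (comb_add_w1 x s t).symm
      · refine ⟨s, t+1, by omega, ?_, ?_, ?_⟩
        · rw [hw, map_add, phi1_pr, hp1]; simp only [Matrix.cons_val_zero, Matrix.cons_val_one, Matrix.head_cons, Matrix.cons_val_two, Matrix.tail_cons]; push_cast; ring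
        · rw [hw, map_add, phi2_pr, hp2]; simp only [Matrix.cons_val_zero, Matrix.cons_val_one, Matrix.head_cons, Matrix.cons_val_two, Matrix.tail_cons]; push_cast; ring
        · rw [hw, hf]; push_cast; exact (comb_add_w2 x s t).symm
  have mono1 : ∀ i < a+b, phi1 (f i) ≤ phi1 (f (i+1)) := by
    intro i hi
    rcases hex i hi with hw | hw <;> rw [hw, map_add] <;>
      [rw [phi1_pr]; rw [phi1_pr]] <;> norm_num [Matrix.cons_val_two, Matrix.tail_cons, Matrix.head_cons]
  have mono2 : ∀ i < a+b, phi2 (f i) ≤ phi2 (f (i+1)) := by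
    intro i hi
    rcases hex i hi with hw | hw <;> rw [hw, map_add] <;>
      [rw [phi2_pr]; rw [phi2_pr]] <;> norm_num [Matrix.cons_val_two, Matrix.tail_cons, Matrix.head_cons]
  intro i hi
  obtain ⟨s, t, hst, hp1, hp2, hf⟩ := key i hi
  have hb1 : phi1 (f i) ≤ phi1 (f (a+b)) := by
    have := chain_mono (fun j => phi1 (f j)) (a+b) mono1 i (a+b-i) (by omega)
    have e : i + (a+b-i) = a+b := by omega
    rw [e] at this; exact this
  have hb2 : phi2 (f i) ≤ phi2 (f (a+b)) := by
    have := chain_mono (fun j => phi2 (f j)) (a+b) mono2 i (a+b-i) (by omega)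
    have e : i + (a+b-i) = a+b := by omega
    rw [e] at this; exact this
  have ht1 : phi1 (f (a+b)) = phi1 x + a := by rw [hm, phi1_target]
  have ht2 : phi2 (f (a+b)) = phi2 x + b := by rw [hm, phi2_target]
  refine ⟨s, t, by omega, by omega, hst, hf⟩

def sig (s t a b i : ℕ) : ℕ := min (i - t) s + (i - (b + s))
def tau (s t a b i : ℕ) : ℕ := min i t + min (i - (t + s)) (b - t)

lemma gpath_isPath (a b s t : ℕ) (hs : s ≤ a) (ht : t ≤ b) (x : A2) :
    IsPath (fun i => x + pr ((sig s t a b i : ℤ) • ![1,0,0] + (tau s t a b i : ℤ) • ![1,1,0]))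
      (a+b) x (x + pr ((a:ℤ) • ![1,0,0] + (b:ℤ) • ![1,1,0])) := by
  refine ⟨?_, ?_, ?_⟩
  · show x + pr ((sig s t a b 0 : ℤ) • _ + (tau s t a b 0 : ℤ) • _) = x
    have e1 : sig s t a b 0 = 0 := by unfold sig; omega
    have e2 : tau s t a b 0 = 0 := by unfold tau; omega
    rw [e1, e2]; push_cast; exact comb_zero x
  · show x + pr ((sig s t a b (a+b) : ℤ) • _ + (tau s t a b (a+b) : ℤ) • _) = _
    have e1 : sig s t a b (a+b) = a := by unfold sig; omega
    have e2 : tau s t a b (a+b) = b := by unfold tau; omega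
    rw [e1, e2]
  · intro i hi
    rcases Nat.lt_or_ge i t with h1 | h1
    · -- ω₂-step
      refine Or.inr ⟨![1,1,0], Set.mem_insert _ _, ?_⟩
      show x + pr ((sig s t a b (i+1) : ℤ) • _ + (tau s t a b (i+1) : ℤ) • _) = _
      have e1 : sig s t a b (i+1) = sig s t a b i := by unfold sig; omega
      have e2 : tau s t a b (i+1) = tau s t a b i + 1 := by unfold tau; omega
      rw [e1, e2]; push_cast; exact comb_add_w2 x _ _
    rcases Nat.lt_or_ge i (t+s) with h2 | h2
    · refine Or.inl ⟨![1,0,0], Set.mem_insert _ _, ?_⟩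
      show x + pr ((sig s t a b (i+1) : ℤ) • _ + (tau s t a b (i+1) : ℤ) • _) = _
      have e1 : sig s t a b (i+1) = sig s t a b i + 1 := by unfold sig; omega
      have e2 : tau s t a b (i+1) = tau s t a b i := by unfold tau; omega
      rw [e1, e2]; push_cast; exact comb_add_w1 x _ _
    rcases Nat.lt_or_ge i (s+b) with h3 | h3
    · refine Or.inr ⟨![1,1,0], Set.mem_insert _ _, ?_⟩
      show x + pr ((sig s t a b (i+1) : ℤ) • _ + (tau s t a b (i+1) : ℤ) • _) = _
      have e1 : sig s t a b (i+1) = sig s t a b i := by unfold sig; omega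
      have e2 : tau s t a b (i+1) = tau s t a b i + 1 := by unfold tau; omega
      rw [e1, e2]; push_cast; exact comb_add_w2 x _ _
    · refine Or.inl ⟨![1,0,0], Set.mem_insert _ _, ?_⟩
      show x + pr ((sig s t a b (i+1) : ℤ) • _ + (tau s t a b (i+1) : ℤ) • _) = _
      have e1 : sig s t a b (i+1) = sig s t a b i + 1 := by unfold sig; omega
      have e2 : tau s t a b (i+1) = tau s t a b i := by unfold tau; omega
      rw [e1, e2]; push_cast; exact comb_add_w1 x _ _

end A2aux

open A2aux in
/-- For `d(x,y) = a·ω₁ + b·ω₂` with `a, b ≥ 1`: the set of vertices lying on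
combinatorial geodesics (paths of minimal length `a + b` of `ω₁`- and `ω₂`-steps) from
`x` to `y` is exactly the parallelogram `{x + s·ω₁ + t·ω₂ : 0 ≤ s ≤ a, 0 ≤ t ≤ b}`;
moreover the geodesic taking `b` `ω₂`-steps followed by `a` `ω₁`-steps (the upper
boundary) is unique, as is the geodesic taking `a` `ω₁`-steps followed by `b` `ω₂`-steps
(the lower boundary). -/
theorem geodesic_parallelogram (a b : ℕ) (ha : 1 ≤ a) (hb : 1 ≤ b) (x y : A2)
    (h : y = x + pr ((a : ℤ) • ![1, 0, 0] + (b : ℤ) • ![1, 1, 0])) :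
    ({z : A2 | ∃ f : ℕ → A2, IsPath f (a + b) x y ∧ ∃ i ≤ a + b, f i = z} =
      {z : A2 | ∃ s t : ℕ, s ≤ a ∧ t ≤ b ∧
        z = x + pr ((s : ℤ) • ![1, 0, 0] + (t : ℤ) • ![1, 1, 0])}) ∧
    (∀ f : ℕ → A2, f 0 = x → f (a + b) = y →
      (∀ i < b, Step2 (f i) (f (i + 1))) →
      (∀ i, b ≤ i → i < a + b → Step1 (f i) (f (i + 1))) →
      ∀ i ≤ a + b,
        f i = x + pr ((min i b : ℤ) • ![1, 1, 0] + ((i - b : ℕ) : ℤ) • ![1, 0, 0])) ∧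
    (∀ f : ℕ → A2, f 0 = x → f (a + b) = y →
      (∀ i < a, Step1 (f i) (f (i + 1))) →
      (∀ i, a ≤ i → i < a + b → Step2 (f i) (f (i + 1))) →
      ∀ i ≤ a + b,
        f i = x + pr ((min i a : ℤ) • ![1, 0, 0] + ((i - a : ℕ) : ℤ) • ![1, 1, 0])) := by
  refine ⟨?_, ?_, ?_⟩
  · ext z
    simp only [Set.mem_setOf_eq]
    constructor
    · rintro ⟨f, ⟨h0, hmY, hstep⟩, i, hi, hfz⟩
      have hm : f (a+b) = x + pr ((a:ℤ) • ![1,0,0] + (b:ℤ) • ![1,1,0]) := hmY.trans h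
      obtain ⟨s, t, hs, ht, _, hf⟩ := geo_points a b x f h0 hm hstep i hi
      exact ⟨s, t, hs, ht, hfz ▸ hf⟩
    · rintro ⟨s, t, hs, ht, hz⟩
      refine ⟨fun i => x + pr ((sig s t a b i : ℤ) • ![1,0,0] + (tau s t a b i : ℤ) • ![1,1,0]),
        h ▸ gpath_isPath a b s t hs ht x, s + t, by omega, ?_⟩
      show x + pr ((sig s t a b (s+t) : ℤ) • ![1,0,0] + (tau s t a b (s+t) : ℤ) • ![1,1,0]) = z
      have e1 : sig s t a b (s+t) = s := by unfold sig; omega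
      have e2 : tau s t a b (s+t) = t := by unfold tau; omega
      rw [e1, e2, hz]
  · intro f h0 hmY h2s h1s
    have hstep : ∀ i < a+b, Step (f i) (f (i+1)) := by
      intro i hi
      rcases Nat.lt_or_ge i b with hib | hib
      · exact Or.inr (h2s i hib)
      · exact Or.inl (h1s i hib hi)
    have hm3 : phi3 (f (a+b)) = phi3 (f 0) + (a+b : ℕ) := by
      rw [hmY, h, h0, phi3_target]; push_cast; ring
    have hincr := geo_incr (a+b) f hm3 hstep
    intro i
    induction i with
    | zero =>
      intro _
      rw [h0, left_eq_add]
      have e1 : (min ((0:ℕ):ℤ) (b:ℤ)) = ((0:ℕ):ℤ) :=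
        min_eq_left (by exact_mod_cast Nat.zero_le b)
      have e2 : (0:ℕ) - b = 0 := by omega
      rw [e1, e2]
      simp [pr]
    | succ n ih =>
      intro hn
      have ihn := ih (by omega)
      rcases Nat.lt_or_ge n b with hnb | hnb
      · have hw : f (n+1) = f n + pr ![1,1,0] :=
          step2_exact (h2s n hnb) (hincr n (by omega))
        have e1 : (min ((n+1:ℕ):ℤ) (b:ℤ)) = min ((n:ℕ):ℤ) (b:ℤ) + 1 := by omega
        have e2 : (((n+1) - b : ℕ):ℤ) = ((n - b : ℕ):ℤ) := by omega
        rw [hw, ihn, e1, e2]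
        exact (comb_add_w2' x _ _).symm
      · have hw : f (n+1) = f n + pr ![1,0,0] :=
          step1_exact (h1s n hnb (by omega)) (hincr n (by omega))
        have e1 : (min ((n+1:ℕ):ℤ) (b:ℤ)) = min ((n:ℕ):ℤ) (b:ℤ) := by omega
        have e2 : (((n+1) - b : ℕ):ℤ) = ((n - b : ℕ):ℤ) + 1 := by omega
        rw [hw, ihn, e1, e2]
        exact (comb_add_w1' x _ _).symm
  · intro f h0 hmY h1s h2s
    have hstep : ∀ i < a+b, Step (f i) (f (i+1)) := by
      intro i hi
      rcases Nat.lt_or_ge i a with hia | hia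
      · exact Or.inl (h1s i hia)
      · exact Or.inr (h2s i hia hi)
    have hm3 : phi3 (f (a+b)) = phi3 (f 0) + (a+b : ℕ) := by
      rw [hmY, h, h0, phi3_target]; push_cast; ring
    have hincr := geo_incr (a+b) f hm3 hstep
    intro i
    induction i with
    | zero =>
      intro _
      rw [h0, left_eq_add]
      have e1 : (min ((0:ℕ):ℤ) (a:ℤ)) = ((0:ℕ):ℤ) :=
        min_eq_left (by exact_mod_cast Nat.zero_le a)
      have e2 : (0:ℕ) - a = 0 := by omega
      rw [e1, e2]
      simp [pr]
    | succ n ih =>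
      intro hn
      have ihn := ih (by omega)
      rcases Nat.lt_or_ge n a with hna | hna
      · have hw : f (n+1) = f n + pr ![1,0,0] :=
          step1_exact (h1s n hna) (hincr n (by omega))
        have e1 : (min ((n+1:ℕ):ℤ) (a:ℤ)) = min ((n:ℕ):ℤ) (a:ℤ) + 1 := by omega
        have e2 : (((n+1) - a : ℕ):ℤ) = ((n - a : ℕ):ℤ) := by omega
        rw [hw, ihn, e1, e2]
        exact (comb_add_w1 x _ _).symm
      · have hw : f (n+1) = f n + pr ![1,1,0] :=
          step2_exact (h2s n hna (by omega)) (hincr n (by omega))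
        have e1 : (min ((n+1:ℕ):ℤ) (a:ℤ)) = min ((n:ℕ):ℤ) (a:ℤ) := by omega
        have e2 : (((n+1) - a : ℕ):ℤ) = ((n - a : ℕ):ℤ) + 1 := by omega
        rw [hw, ihn, e1, e2]
        exact (comb_add_w2 x _ _).symm
end
end

section
/- Let K = ℂ((t)), O = ℂ[[t]], and let L, L' be O-lattices in K³ with d([L],[L']) = aω₁ + bω₂ where a, b are positive integers. Then conv([L],[L']) := minconv([L],[L']) ∩ maxconv([L],[L']) = {[L],[L']}, i.e. the intersection of the min- and max-convex hulls of two classes at 'generic' distance is trivial. -/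
set_option maxHeartbeats 1000000
set_option synthInstance.maxHeartbeats 1000000

open Pointwise

noncomputable section

namespace ConvAux

open Submodule Set

/-- membership in the image of `O` in `K` -/
def inO (x : K) : Prop := x ∈ (algebraMap O K).range

lemma inO_mul {x y : K} (hx : inO x) (hy : inO y) : inO (x * y) := mul_mem hx hy

lemma inO_zero : inO 0 := ⟨0, map_zero _⟩

lemma inO_tK_zpow {m : ℤ} (hm : 0 ≤ m) : inO (tK ^ m) := by
  lift m to ℕ using hm
  exact ⟨PowerSeries.X ^ m, by rw [map_pow, zpow_natCast]; rfl⟩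

lemma not_inO_tK_zpow {m : ℤ} (hm : m < 0) : ¬ inO (tK ^ m) := by
  rintro ⟨f, hf⟩
  have h1 : algebraMap O K (f * PowerSeries.X ^ (-m).toNat) = 1 := by
    rw [map_mul, hf, map_pow]
    rw [show ((algebraMap O K) PowerSeries.X) = tK from rfl]
    rw [← zpow_natCast, ← zpow_add₀ tK_ne_zero,
      Int.toNat_of_nonneg (by omega : (0:ℤ) ≤ -m)]
    simp
  have h2 : f * PowerSeries.X ^ (-m).toNat = 1 :=
    IsFractionRing.injective O K (by rw [h1, map_one])
  have h3 := congrArg (PowerSeries.constantCoeff (R := ℂ)) h2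
  rw [map_one, map_mul, map_pow, PowerSeries.constantCoeff_X,
    zero_pow (by omega : (-m).toNat ≠ 0), mul_zero] at h3
  exact zero_ne_one h3

lemma inO_tK_zpow_iff {m : ℤ} : inO (tK ^ m) ↔ 0 ≤ m :=
  ⟨fun h => by by_contra hm; exact not_inO_tK_zpow (by omega) h, inO_tK_zpow⟩

lemma inO_shift {x : K} {m n : ℤ} (h : m ≤ n) (hx : inO (tK ^ (-n) * x)) :
    inO (tK ^ (-m) * x) := by
  have : tK ^ (-m) * x = tK ^ (n - m) * (tK ^ (-n) * x) := by
    rw [← mul_assoc, ← zpow_add₀ tK_ne_zero, show n - m + -n = -m by omega]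
  rw [this]
  exact inO_mul (inO_tK_zpow (by omega)) hx

lemma eq_tK_mul {m : ℤ} {x y : K} (h : tK ^ (-m) * x = y) : x = tK ^ m * y := by
  rw [← h, ← mul_assoc, ← zpow_add₀ tK_ne_zero, add_neg_cancel, zpow_zero, one_mul]

lemma forall_fin3 {P : Fin 3 → Prop} (h0 : P 0) (h1 : P 1) (h2 : P 2) : ∀ i, P i := by
  intro i
  fin_cases i <;> assumption

variable (v : Module.Basis (Fin 3) K (V 3))

/-- The "diagonal" lattice with exponents `e` relative to the basis `v`. -/
def D (e : Fin 3 → ℤ) : Submodule O (V 3) :=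
  Submodule.span O (Set.range fun i => (tK ^ (e i)) • v i)

lemma repr_sum (f : Fin 3 → O) (e : Fin 3 → ℤ) :
    ⇑(v.repr (∑ i, f i • (tK ^ (e i)) • v i)) =
      fun i => algebraMap O K (f i) * tK ^ (e i) := by
  have : (∑ i, f i • (tK ^ (e i)) • v i)
      = ∑ i, (algebraMap O K (f i) * tK ^ (e i)) • v i := by
    refine Finset.sum_congr rfl fun j _ => ?_
    rw [← smul_smul]
    exact (algebraMap_smul K (f j) ((tK ^ e j) • v j)).symm
  rw [this, Module.Basis.repr_sum_self]

lemma mem_D {e : Fin 3 → ℤ} {w : V 3} :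
    w ∈ D v e ↔ ∀ i, inO (tK ^ (-(e i)) * v.repr w i) := by
  rw [D, mem_span_range_iff_exists_fun]
  constructor
  · rintro ⟨f, rfl⟩ i
    rw [repr_sum]
    refine ⟨f i, ?_⟩
    show algebraMap O K (f i) = tK ^ (-e i) * (algebraMap O K (f i) * tK ^ e i)
    rw [mul_comm ((algebraMap O K) (f i)), ← mul_assoc, ← zpow_add₀ tK_ne_zero,
      neg_add_cancel, zpow_zero, one_mul]
  · intro h
    choose f hf using h
    refine ⟨f, v.repr.injective (Finsupp.ext fun j => ?_)⟩
    have hr := congrFun (repr_sum v f e) j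
    rw [hr, eq_tK_mul (hf j).symm]
    exact mul_comm _ _

lemma D_le_D {e e' : Fin 3 → ℤ} : D v e ≤ D v e' ↔ ∀ i, e' i ≤ e i := by
  constructor
  · intro h i
    have hg : (tK ^ (e i)) • v i ∈ D v e := subset_span ⟨i, rfl⟩
    have hm := (mem_D v).1 (h hg) i
    rw [map_smul, Finsupp.smul_apply, Module.Basis.repr_self, Finsupp.single_eq_same,
      smul_eq_mul, mul_one, ← zpow_add₀ tK_ne_zero] at hm
    have := inO_tK_zpow_iff.1 hm
    omega
  · intro h
    rw [D, span_le]
    rintro _ ⟨i, rfl⟩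
    rw [SetLike.mem_coe, mem_D]
    intro j
    rw [map_smul, Finsupp.smul_apply, Module.Basis.repr_self, smul_eq_mul]
    rcases eq_or_ne j i with rfl | hij
    · rw [Finsupp.single_eq_same, mul_one, ← zpow_add₀ tK_ne_zero]
      exact inO_tK_zpow (by have := h j; omega)
    · rw [Finsupp.single_eq_of_ne hij, mul_zero, mul_zero]
      exact inO_zero

lemma D_inj {e e' : Fin 3 → ℤ} (h : D v e = D v e') : e = e' := by
  funext i
  have h1 := (D_le_D v).1 h.le i
  have h2 := (D_le_D v).1 h.ge i
  omega

lemma D_inf (e e' : Fin 3 → ℤ) :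
    D v e ⊓ D v e' = D v (fun i => max (e i) (e' i)) := by
  ext w
  rw [Submodule.mem_inf, mem_D, mem_D, mem_D]
  constructor
  · rintro ⟨h1, h2⟩ i
    rcases le_total (e i) (e' i) with h | h
    · rw [max_eq_right h]; exact h2 i
    · rw [max_eq_left h]; exact h1 i
  · intro h
    exact ⟨fun i => inO_shift (le_max_left _ _) (h i),
      fun i => inO_shift (le_max_right _ _) (h i)⟩

lemma D_sup (e e' : Fin 3 → ℤ) :
    D v e ⊔ D v e' = D v (fun i => min (e i) (e' i)) := by
  apply le_antisymm
  · exact sup_le ((D_le_D v).2 fun i => min_le_left _ _)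
      ((D_le_D v).2 fun i => min_le_right _ _)
  · rw [D, span_le]
    rintro _ ⟨i, rfl⟩
    rw [SetLike.mem_coe]
    show (tK ^ (min (e i) (e' i))) • v i ∈ D v e ⊔ D v e'
    rcases le_total (e i) (e' i) with h | h
    · have hmem : (tK ^ (min (e i) (e' i))) • v i ∈ D v e := by
        rw [min_eq_left h]
        exact subset_span ⟨i, rfl⟩
      exact (le_sup_left : D v e ≤ _) hmem
    · have hmem : (tK ^ (min (e i) (e' i))) • v i ∈ D v e' := by
        rw [min_eq_right h]
        exact subset_span ⟨i, rfl⟩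
      exact (le_sup_right : D v e' ≤ _) hmem

lemma smul_D (k : ℤ) (e : Fin 3 → ℤ) :
    (tK ^ k) • D v e = D v (fun i => e i + k) := by
  rw [D, D, Submodule.smul_span, Set.smul_set_range]
  congr 1
  refine congrArg Set.range (funext fun i => ?_)
  show tK ^ k • (tK ^ (e i)) • v i = (tK ^ (e i + k)) • v i
  funext j
  simp only [Pi.smul_apply, smul_eq_mul]
  rw [← mul_assoc, ← zpow_add₀ tK_ne_zero, add_comm]

lemma classD_eq {e e' : Fin 3 → ℤ} :
    (⟦D v e⟧ : LatClass 3) = ⟦D v e'⟧ ↔ ∃ k : ℤ, ∀ i, e' i = e i + k := by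
  constructor
  · intro h
    obtain ⟨k, hk⟩ : Homothetic (D v e) (D v e') := Quotient.exact h
    rw [smul_D] at hk
    exact ⟨k, fun i => congrFun (D_inj v hk) i⟩
  · rintro ⟨k, hk⟩
    refine Quotient.sound ⟨k, ?_⟩
    rw [smul_D]
    exact congrArg (D v) (funext fun i => hk i)

end ConvAux


/-- If `d([L],[L']) = a·ω₁ + b·ω₂` with `a, b ≥ 1` (witnessed by a `K`-basis `v` of `K³`
with `L = span_O(v₁,v₂,v₃)` and `L' = span_O(t^{-(a+b)}v₁, t^{-b}v₂, v₃)`), then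
`conv([L],[L']) = minconv([L],[L']) ∩ maxconv([L],[L']) = {[L],[L']}`, where
`minconv([L],[L']) = {[L ∩ t^c L'] : c ∈ ℤ}` and `maxconv([L],[L']) = {[L + t^c L'] : c ∈ ℤ}`. -/
theorem conv_pair_trivial (a b : ℕ) (ha : 1 ≤ a) (hb : 1 ≤ b)
    (v : Module.Basis (Fin 3) K (V 3)) :
    let L : Submodule O (V 3) := Submodule.span O (Set.range fun i => (v i : V 3))
    let L' : Submodule O (V 3) := Submodule.span O
      (Set.range ![(tK ^ (-(a + b : ℤ))) • v 0, (tK ^ (-(b : ℤ))) • v 1, v 2])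
    {C : LatClass 3 | ∃ c : ℤ, C = ⟦L ⊓ (tK ^ c) • L'⟧} ∩
      {C : LatClass 3 | ∃ c : ℤ, C = ⟦L ⊔ (tK ^ c) • L'⟧} =
    {(⟦L⟧ : LatClass 3), (⟦L'⟧ : LatClass 3)} := by
  intro L L'
  classical
  set e₀ : Fin 3 → ℤ := ![-(a + b : ℤ), -(b : ℤ), 0] with he₀
  have e00 : e₀ 0 = -(a + b : ℤ) := rfl
  have e01 : e₀ 1 = -(b : ℤ) := rfl
  have e02 : e₀ 2 = 0 := rfl
  have hL : L = ConvAux.D v (fun _ => 0) := by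
    show Submodule.span O (Set.range fun i => (v i : V 3)) = _
    rw [ConvAux.D]
    congr 1
    exact congrArg Set.range (funext fun i => by rw [zpow_zero, one_smul])
  have hL' : L' = ConvAux.D v e₀ := by
    show Submodule.span O
      (Set.range ![(tK ^ (-(a + b : ℤ))) • v 0, (tK ^ (-(b : ℤ))) • v 1, v 2]) = _
    rw [ConvAux.D]
    congr 1
    refine congrArg Set.range (funext (ConvAux.forall_fin3 ?_ ?_ ?_))
    · rfl
    · rfl
    · show v 2 = tK ^ (0 : ℤ) • v 2
      rw [zpow_zero, one_smul]
  have hinf : ∀ c : ℤ, L ⊓ (tK ^ c) • L' = ConvAux.D v (fun i => max 0 (e₀ i + c)) := by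
    intro c
    rw [hL, hL', ConvAux.smul_D, ConvAux.D_inf]
  have hsup : ∀ c : ℤ, L ⊔ (tK ^ c) • L' = ConvAux.D v (fun i => min 0 (e₀ i + c)) := by
    intro c
    rw [hL, hL', ConvAux.smul_D, ConvAux.D_sup]
  ext C
  simp only [Set.mem_inter_iff, Set.mem_setOf_eq, Set.mem_insert_iff, Set.mem_singleton_iff]
  constructor
  · rintro ⟨⟨c, rfl⟩, ⟨c', hc'⟩⟩
    rw [hinf c] at hc' ⊢
    rw [hsup c'] at hc'
    obtain ⟨k, hk⟩ := (ConvAux.classD_eq v).1 hc'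
    have h0 := hk 0
    have h1 := hk 1
    have h2 := hk 2
    simp only [e00, e01, e02] at h0 h1 h2
    have key : (max (0:ℤ) (-(a + b : ℤ) + c) = max 0 c ∧ max (0:ℤ) (-(b:ℤ) + c) = max 0 c)
        ∨ (max (0:ℤ) (-(a + b : ℤ) + c) = -(a + b : ℤ) + max 0 c ∧
            max (0:ℤ) (-(b:ℤ) + c) = -(b:ℤ) + max 0 c) := by omega
    rcases key with ⟨k1, k2⟩ | ⟨k1, k2⟩
    · left
      rw [hL]
      refine (ConvAux.classD_eq v).2 ⟨-(max 0 c), ConvAux.forall_fin3 ?_ ?_ ?_⟩ <;>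
        · simp only [e00, e01, e02]
          omega
    · right
      rw [hL']
      refine (ConvAux.classD_eq v).2 ⟨-(max 0 c), ConvAux.forall_fin3 ?_ ?_ ?_⟩ <;>
        · simp only [e00, e01, e02]
          omega
  · rintro (rfl | rfl)
    · refine ⟨⟨0, ?_⟩, ⟨(a + b : ℤ), ?_⟩⟩
      · rw [hinf 0, hL]
        refine (ConvAux.classD_eq v).2 ⟨0, ConvAux.forall_fin3 ?_ ?_ ?_⟩ <;>
          · simp only [e00, e01, e02]
            omega
      · rw [hsup (a + b : ℤ), hL]
        refine (ConvAux.classD_eq v).2 ⟨0, ConvAux.forall_fin3 ?_ ?_ ?_⟩ <;>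
          · simp only [e00, e01, e02]
            omega
    · refine ⟨⟨(a + b : ℤ), ?_⟩, ⟨0, ?_⟩⟩
      · rw [hinf (a + b : ℤ), hL']
        refine (ConvAux.classD_eq v).2 ⟨(a + b : ℤ), ConvAux.forall_fin3 ?_ ?_ ?_⟩ <;>
          · simp only [e00, e01, e02]
            omega
      · rw [hsup 0, hL']
        refine (ConvAux.classD_eq v).2 ⟨0, ConvAux.forall_fin3 ?_ ?_ ?_⟩ <;>
          · simp only [e00, e01, e02]
            omega
end
end

section
/- Let K = ℂ((t)), O = ℂ[[t]], and let L, L' be O-lattices in K³ with d([L],[L']) = kω₁ for some k ≥ 0 (or kω₂). Then minconv([L],[L']) = maxconv([L],[L']), and this common set has exactly k+1 elements, forming the straight-path geodesic from [L] to [L']. -/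
set_option maxHeartbeats 1000000
set_option synthInstance.maxHeartbeats 1000000

open Pointwise

noncomputable section

def OR : Set K := Set.range (algebraMap O K)

lemma tK_zpow_mem_of_nonneg {m : ℤ} (hm : 0 ≤ m) : tK ^ m ∈ OR := by
  lift m to ℕ using hm
  exact ⟨PowerSeries.X ^ m, by rw [map_pow, zpow_natCast]; rfl⟩

lemma OR_mul_mem {x y : K} (hx : x ∈ OR) (hy : y ∈ OR) : x * y ∈ OR := by
  obtain ⟨a, rfl⟩ := hx; obtain ⟨b, rfl⟩ := hy; exact ⟨a * b, map_mul _ _ _⟩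

lemma mem_OR_mono {m n : ℤ} (h : m ≤ n) {x : K} (hx : tK ^ m * x ∈ OR) :
    tK ^ n * x ∈ OR := by
  have : tK ^ n * x = tK ^ (n - m) * (tK ^ m * x) := by
    rw [← mul_assoc, ← zpow_add₀ tK_ne_zero]; ring_nf
  rw [this]
  exact OR_mul_mem (tK_zpow_mem_of_nonneg (by omega)) hx

lemma nonneg_of_tK_zpow_mem {m : ℤ} (hm : tK ^ m ∈ OR) : 0 ≤ m := by
  by_contra h
  push_neg at h
  obtain ⟨f, hf⟩ := hm
  have key : algebraMap O K (f * PowerSeries.X ^ (-m).toNat) = algebraMap O K 1 := by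
    rw [map_mul, map_pow, hf, map_one]
    show tK ^ m * tK ^ ((-m).toNat : ℕ) = 1
    rw [← zpow_natCast tK, ← zpow_add₀ tK_ne_zero]
    rw [Int.toNat_of_nonneg (by omega)]
    simp
  have h2 := IsFractionRing.injective O K key
  have h3 := congrArg (PowerSeries.constantCoeff (R := ℂ)) h2
  rw [map_mul, map_pow, PowerSeries.constantCoeff_X, map_one,
    zero_pow (by omega : (-m).toNat ≠ 0), mul_zero] at h3
  exact zero_ne_one h3

variable (v : Module.Basis (Fin 3) K (V 3))

def Lam (a : Fin 3 → ℤ) : Submodule O (V 3) :=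
  Submodule.span O (Set.range fun i => tK ^ (a i) • v i)

def uu (a : Fin 3 → ℤ) : Fin 3 → Kˣ := fun i =>
  Units.mk0 (tK ^ (a i)) (zpow_ne_zero _ tK_ne_zero)

lemma mem_Lam_iff (a : Fin 3 → ℤ) (x : V 3) :
    x ∈ Lam v a ↔ ∀ i, tK ^ (-(a i)) * v.repr x i ∈ OR := by
  have hr : Set.range (v.unitsSMul (uu a)) = Set.range fun i => tK ^ (a i) • v i := by
    have : ⇑(v.unitsSMul (uu a)) = fun i => tK ^ (a i) • v i :=
      funext fun i => Module.Basis.unitsSMul_apply i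
    rw [this]
  rw [Lam, ← hr, Module.Basis.mem_span_iff_repr_mem]
  apply forall_congr'
  intro i
  rw [Module.Basis.repr_unitsSMul]
  have huu : ((uu a i)⁻¹ : Kˣ) • v.repr x i = tK ^ (-(a i)) * v.repr x i := by
    rw [Units.smul_def, smul_eq_mul, zpow_neg, Units.val_inv_eq_inv_val]
    rfl
  rw [huu]
  rfl

lemma Lam_inf (a b : Fin 3 → ℤ) :
    Lam v a ⊓ Lam v b = Lam v (fun i => max (a i) (b i)) := by
  ext x
  simp only [Submodule.mem_inf, mem_Lam_iff]
  rw [← forall_and]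
  apply forall_congr'
  intro i
  constructor
  · rintro ⟨h1, h2⟩
    rcases max_cases (a i) (b i) with ⟨he, _⟩ | ⟨he, _⟩ <;> rw [he]
    · exact h1
    · exact h2
  · intro h
    exact ⟨mem_OR_mono (by omega) h, mem_OR_mono (by omega) h⟩

lemma Lam_le_Lam {a b : Fin 3 → ℤ} (h : ∀ i, b i ≤ a i) : Lam v a ≤ Lam v b := by
  intro x hx
  rw [mem_Lam_iff] at hx ⊢
  intro i
  exact mem_OR_mono (by have := h i; omega) (hx i)

lemma Lam_sup (a b : Fin 3 → ℤ) :
    Lam v a ⊔ Lam v b = Lam v (fun i => min (a i) (b i)) := by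
  apply le_antisymm
  · exact sup_le (Lam_le_Lam v fun i => min_le_left _ _)
      (Lam_le_Lam v fun i => min_le_right _ _)
  · rw [Lam, Submodule.span_le]
    rintro _ ⟨i, rfl⟩
    show tK ^ (min (a i) (b i)) • v i ∈ (Lam v a ⊔ Lam v b : Submodule O (V 3))
    rcases min_cases (a i) (b i) with ⟨he, _⟩ | ⟨he, _⟩ <;> rw [he]
    · exact Submodule.mem_sup_left (Submodule.subset_span ⟨i, rfl⟩)
    · exact Submodule.mem_sup_right (Submodule.subset_span ⟨i, rfl⟩)

lemma Lam_smul (m : ℤ) (a : Fin 3 → ℤ) :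
    (tK ^ m) • Lam v a = Lam v (fun i => m + a i) := by
  rw [Lam, Submodule.smul_span, Lam, Set.smul_set_range]
  have he : (fun i => tK ^ m • tK ^ (a i) • v i) = fun i => tK ^ (m + a i) • v i :=
    funext fun i => by rw [zpow_add₀ tK_ne_zero, smul_smul]
  rw [he]

lemma Lam_inj {a b : Fin 3 → ℤ} (h : Lam v a = Lam v b) : a = b := by
  have key : ∀ (a b : Fin 3 → ℤ), Lam v a ≤ Lam v b → ∀ i, b i ≤ a i := by
    intro a b hle i
    have hg : tK ^ (a i) • v i ∈ Lam v a := Submodule.subset_span ⟨i, rfl⟩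
    have := (mem_Lam_iff v b _).1 (hle hg) i
    rw [map_smul, Finsupp.smul_apply, smul_eq_mul, ← mul_assoc, ← zpow_add₀ tK_ne_zero,
      Module.Basis.repr_self, Finsupp.single_eq_same] at this
    rw [mul_one] at this
    have := nonneg_of_tK_zpow_mem this
    omega
  funext i
  have h1 := key a b h.le i
  have h2 := key b a h.ge i
  omega

lemma Lam_class_eq_iff (a b : Fin 3 → ℤ) :
    (⟦Lam v a⟧ : LatClass 3) = ⟦Lam v b⟧ ↔ ∃ m : ℤ, ∀ i, b i = m + a i := by
  rw [Quotient.eq]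
  constructor
  · rintro ⟨m, hm⟩
    rw [Lam_smul] at hm
    have := Lam_inj v hm.symm
    exact ⟨m, fun i => (congrFun this i).symm⟩
  · rintro ⟨m, hm⟩
    refine ⟨m, ?_⟩
    rw [Lam_smul]
    congr 1
    funext i
    exact hm i

lemma span_matrix_eq (m : ℤ) :
    Submodule.span O (Set.range ![(tK ^ m) • v 0, (v 1 : V 3), v 2]) = Lam v ![m, 0, 0] := by
  rw [Lam]
  have he : ![(tK ^ m) • v 0, (v 1 : V 3), v 2] = fun i => tK ^ (![m, 0, 0] i) • v i := by
    funext i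
    fin_cases i <;> simp
  rw [he]

/-- If `d([L],[L']) = k·ω₁` (witnessed by a `K`-basis `v` of `K³` with
`L = span_O(v₁,v₂,v₃)` and `L' = span_O(t^{-k}v₁, v₂, v₃)`), then
`minconv([L],[L']) = maxconv([L],[L'])`, and this common set is the straight-path
geodesic `{[span_O(t^{-c}v₁, v₂, v₃)] : 0 ≤ c ≤ k}` from `[L]` to `[L']`, which has
exactly `k + 1` elements. -/
theorem minconv_eq_maxconv_straight (k : ℕ) (v : Module.Basis (Fin 3) K (V 3)) :
    let L : Submodule O (V 3) := Submodule.span O (Set.range fun i => (v i : V 3))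
    let L' : Submodule O (V 3) := Submodule.span O
      (Set.range ![(tK ^ (-(k : ℤ))) • v 0, (v 1 : V 3), v 2])
    {C : LatClass 3 | ∃ c : ℤ, C = ⟦L ⊓ (tK ^ c) • L'⟧} =
      {C : LatClass 3 | ∃ c : ℤ, C = ⟦L ⊔ (tK ^ c) • L'⟧} ∧
    {C : LatClass 3 | ∃ c : ℤ, C = ⟦L ⊓ (tK ^ c) • L'⟧} =
      {C : LatClass 3 | ∃ c : ℕ, c ≤ k ∧ C = ⟦Submodule.span O
        (Set.range ![(tK ^ (-(c : ℤ))) • v 0, (v 1 : V 3), v 2])⟧} ∧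
    {C : LatClass 3 | ∃ c : ℤ, C = ⟦L ⊓ (tK ^ c) • L'⟧}.ncard = k + 1 := by
  intro L L'
  have hL : L = Lam v ![0, 0, 0] := by
    show Submodule.span O _ = _
    rw [Lam]
    have he : (fun i => (v i : V 3)) = fun i => tK ^ ((![0,0,0] : Fin 3 → ℤ) i) • v i := by
      funext i
      fin_cases i <;> simp
    rw [he]
  have hL' : L' = Lam v ![-(k : ℤ), 0, 0] := span_matrix_eq v _
  -- the three relevant families of lattices
  have hinf : ∀ c : ℤ, L ⊓ (tK ^ c) • L' =
      Lam v ![max 0 (c - k), max 0 c, max 0 c] := by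
    intro c
    rw [hL, hL', Lam_smul, Lam_inf]
    congr 1
    funext i
    fin_cases i <;> simp <;> omega
  have hsup : ∀ c : ℤ, L ⊔ (tK ^ c) • L' =
      Lam v ![min 0 (c - k), min 0 c, min 0 c] := by
    intro c
    rw [hL, hL', Lam_smul, Lam_sup]
    congr 1
    funext i
    fin_cases i <;> simp <;> omega
  -- straight set in Lam form
  have hstraight : {C : LatClass 3 | ∃ c : ℕ, c ≤ k ∧ C = ⟦Submodule.span O
      (Set.range ![(tK ^ (-(c : ℤ))) • v 0, (v 1 : V 3), v 2])⟧} =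
      {C : LatClass 3 | ∃ c : ℕ, c ≤ k ∧ C = ⟦Lam v ![-(c : ℤ), 0, 0]⟧} := by
    ext C
    simp only [Set.mem_setOf_eq, span_matrix_eq]
  have hinf_st : {C : LatClass 3 | ∃ c : ℤ, C = ⟦L ⊓ (tK ^ c) • L'⟧} =
      {C : LatClass 3 | ∃ c : ℕ, c ≤ k ∧ C = ⟦Lam v ![-(c : ℤ), 0, 0]⟧} := by
    ext C
    simp only [Set.mem_setOf_eq]
    constructor
    · rintro ⟨c, rfl⟩
      refine ⟨(max 0 c - max 0 (c - k)).toNat, by omega, ?_⟩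
      rw [hinf c]
      refine (Lam_class_eq_iff v _ _).2 ⟨-(max 0 c), fun i => ?_⟩
      fin_cases i <;> simp <;> omega
    · rintro ⟨c, hck, rfl⟩
      refine ⟨(c : ℤ), ?_⟩
      rw [hinf c]
      refine ((Lam_class_eq_iff v _ _).2 ⟨-(c : ℤ), fun i => ?_⟩).symm
      fin_cases i <;> simp <;> omega
  have hsup_st : {C : LatClass 3 | ∃ c : ℤ, C = ⟦L ⊔ (tK ^ c) • L'⟧} =
      {C : LatClass 3 | ∃ c : ℕ, c ≤ k ∧ C = ⟦Lam v ![-(c : ℤ), 0, 0]⟧} := by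
    ext C
    simp only [Set.mem_setOf_eq]
    constructor
    · rintro ⟨c, rfl⟩
      refine ⟨(min 0 c - min 0 (c - k)).toNat, by omega, ?_⟩
      rw [hsup c]
      refine (Lam_class_eq_iff v _ _).2 ⟨-(min 0 c), fun i => ?_⟩
      fin_cases i <;> simp <;> omega
    · rintro ⟨c, hck, rfl⟩
      refine ⟨(k : ℤ) - c, ?_⟩
      rw [hsup ((k : ℤ) - c)]
      refine ((Lam_class_eq_iff v _ _).2 ⟨0, fun i => ?_⟩).symm
      fin_cases i <;> simp <;> omega
  refine ⟨hinf_st.trans hsup_st.symm, hinf_st.trans hstraight.symm, ?_⟩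
  -- cardinality
  rw [hinf_st]
  have himg : {C : LatClass 3 | ∃ c : ℕ, c ≤ k ∧ C = ⟦Lam v ![-(c : ℤ), 0, 0]⟧} =
      (fun c : ℕ => (⟦Lam v ![-(c : ℤ), 0, 0]⟧ : LatClass 3)) '' Set.Iic k := by
    ext C
    simp only [Set.mem_setOf_eq, Set.mem_image, Set.mem_Iic]
    constructor
    · rintro ⟨c, h1, rfl⟩; exact ⟨c, h1, rfl⟩
    · rintro ⟨c, h1, rfl⟩; exact ⟨c, h1, rfl⟩
  rw [himg]; erw [Set.ncard_image_of_injOn]; rw [← Finset.coe_Iic, Set.ncard_coe_finset, Nat.card_Iic]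
  intro c1 _ c2 _ hcc
  obtain ⟨m, hm⟩ := (Lam_class_eq_iff v _ _).1 hcc
  have h0 := hm 0
  have h1 := hm 1
  simp at h0 h1
  omega
end
end

section
/- In a cylindrical growth diagram for SL₃ of type λ⃗ with γ_{1,2} = ω₁, γ_{2,3} = ω₂, and γ_{1,3} = ω₃ = (1,1,1) (a 'U-turn'), one has γ_{1,j} = γ_{3,j} + (1,1,1) as partitions for all 3 ≤ j ≤ n+1, and the set dif(γ_{1,j}, γ_{2,j}) equals {3} for every j ≥ 3. -/
noncomputable section

/-- In a cylindrical growth diagram with a `U-turn`: `γ_{1,2} = ω₁`, `γ_{2,3} = ω₂`,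
`γ_{1,3} = ω₃ = (1,1,1)`.  Then `γ_{1,j} = γ_{3,j} + (1,1,1)` as partitions for all
`3 ≤ j ≤ n+1`, and `dif(γ_{1,j}, γ_{2,j}) = {3}` (the third row, indexed `2` here)
for every such `j`. -/
theorem uturn_dif {n k : ℕ} (hn : 2 ≤ n) (D : CylGrowthDiagram n k)
    (h12 : D.γ 1 2 = ![1, 0, 0]) (h23 : D.γ 2 3 = ![1, 1, 0])
    (h13 : D.γ 1 3 = ![1, 1, 1]) :
    ∀ j : ℤ, 3 ≤ j → j ≤ 1 + n →
      (∀ r, D.γ 1 j r = D.γ 3 j r + 1) ∧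
      (D.γ 1 j 0 = D.γ 2 j 0 ∧ D.γ 1 j 1 = D.γ 2 j 1 ∧ D.γ 1 j 2 = D.γ 2 j 2 + 1) := by
  have sort3_sorted : ∀ x : Fin 3 → ℤ, x 1 ≤ x 0 → x 2 ≤ x 1 → sort3 x = x := by
    intro x h01 h12
    funext r
    fin_cases r <;> simp [sort3] <;> omega
  intro j h3
  refine Int.le_induction
    (motive := fun j _ => j ≤ 1 + (n : ℤ) →
      (∀ r, D.γ 1 j r = D.γ 3 j r + 1) ∧
      (D.γ 1 j 0 = D.γ 2 j 0 ∧ D.γ 1 j 1 = D.γ 2 j 1 ∧ D.γ 1 j 2 = D.γ 2 j 2 + 1))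
    ?_ ?_ j h3
  · intro _
    refine ⟨?_, ?_⟩
    · intro r
      rw [h13, D.diag 3]
      fin_cases r <;> simp
    · rw [h13, h23]; norm_num; decide
  · intro j h3 IH hjn
    obtain ⟨hIH1, hA, hB, hC⟩ := IH (by omega)
    have hant := D.antitone 1 (j + 1) (by omega) (by push_cast; omega)
    -- local rule on square (1, j)
    have loc1 := D.locRule 1 j (by omega) (by push_cast at hjn ⊢; omega)
    norm_num at loc1
    have hx : (fun r => D.γ 2 j r + D.γ 1 (j + 1) r - D.γ 1 j r) =
        sort3 (fun r => D.γ 2 j r + D.γ 1 (j + 1) r - D.γ 1 j r) := by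
      rw [sort3_sorted _ (by omega) (by omega)]
    have h2j : ∀ r, D.γ 2 (j + 1) r = D.γ 2 j r + D.γ 1 (j + 1) r - D.γ 1 j r := by
      intro r
      rw [loc1, ← hx]
    -- local rule on square (2, j)
    have loc2 := D.locRule 2 j (by omega) (by push_cast at hjn ⊢; omega)
    norm_num at loc2
    have h20 := h2j 0; have h21 := h2j 1; have h22 := h2j 2
    have hy : (fun r => D.γ 3 j r + D.γ 2 (j + 1) r - D.γ 2 j r) =
        sort3 (fun r => D.γ 3 j r + D.γ 2 (j + 1) r - D.γ 2 j r) := by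
      have e0 := hIH1 0; have e1 := hIH1 1; have e2 := hIH1 2
      rw [sort3_sorted _ (by omega) (by omega)]
    have h3j : ∀ r, D.γ 3 (j + 1) r = D.γ 3 j r + D.γ 2 (j + 1) r - D.γ 2 j r := by
      intro r
      rw [loc2, ← hy]
    refine ⟨fun r => ?_, by omega, by omega, by omega⟩
    have := h3j r; have := h2j r; have := hIH1 r
    fin_cases r <;> omega
end
end
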